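/- arXiv:math/0703707 — 6 statements merged into one kernel-verified Lean document; each statement's English description precedes it below -/
import Mathlib

section
/- Let p be an odd prime, d ≥ 2 with d ∣ p−1, f = (p−1)/d. For a ∈ 𝔽_p^* with α ≡ ind_ω(a) mod d, and for all k ≥ 1: N(k,a) = (1/p) · [ f^k + Σ_{i=0}^{d−1} η_i^k · η_{i+α+θ} ], where the index i+α+θ is taken mod d. -/
open Finset

/-- The Gauss period `η_i = Σ_{u=0}^{f-1} ζ^{ω^{du+i}}`. -/
noncomputable def gaussPeriod (p d f : ℕ) (ω : (ZMod p)ˣ) (ζ : ℂ) (i : ℕ) : ℂ :=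
  ∑ u ∈ Finset.range f, ζ ^ (((ω : ZMod p) ^ (d * u + i)).val)

/-- The cyclotomic number `(i,j)` of order `d`. -/
noncomputable def cycNum (p d f : ℕ) (ω : (ZMod p)ˣ) (i j : ℕ) : ℕ :=
  Nat.card {uv : ℕ × ℕ // uv.1 < f ∧ uv.2 < f ∧
    (1 : ZMod p) + (ω : ZMod p) ^ (d * uv.1 + i) = (ω : ZMod p) ^ (d * uv.2 + j)}

/-- The cyclotomic integer `n(k,ν) = Σ_{i=0}^{d-1} η_i^k · η_{i+ν}`. -/
noncomputable def nInt (p d f : ℕ) (ω : (ZMod p)ˣ) (ζ : ℂ) (k ν : ℕ) : ℂ :=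
  ∑ i ∈ Finset.range d, (gaussPeriod p d f ω ζ i) ^ k * gaussPeriod p d f ω ζ (i + ν)

/-- `θ = 0` if `f` is even, `θ = d/2` if `f` is odd. -/
def theta (d f : ℕ) : ℕ := if Even f then 0 else d / 2

/-- `N(k,a)`: the number of `k`-tuples of nonzero `d`-th powers summing to `a`. -/
noncomputable def waringCount (p d k : ℕ) (a : ZMod p) : ℕ :=
  Nat.card {t : Fin k → ZMod p //
    (∀ i, ∃ b : (ZMod p)ˣ, ((b : ZMod p)) ^ d = t i) ∧ ∑ i, t i = a}

/-- `s_d(p,a)`: the least `k ≥ 1` such that `a` is a sum of `k` nonzero `d`-th powers. -/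
noncomputable def sWaring (p d : ℕ) (a : ZMod p) : ℕ :=
  sInf {k | 1 ≤ k ∧ ∃ u : Fin k → (ZMod p)ˣ, a = ∑ i, ((u i : ZMod p)) ^ d}

/-- `g_d(p) = max_{a ∈ 𝔽_p^*} s_d(p,a)`. -/
noncomputable def gWaring (p d : ℕ) : ℕ :=
  sSup {s | ∃ a : (ZMod p)ˣ, s = sWaring p d (a : ZMod p)}

/-- Product of a chain of cyclotomic numbers `(a,x₁)(x₁,x₂)⋯(xₘ,b)`. -/
noncomputable def chainProd (c : ℕ → ℕ → ℕ) (a b : ℕ) : List ℕ → ℕ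
  | [] => c a b
  | x :: xs => c a x * chainProd c x b xs

/-- Sum over all chains of `m` intermediate indices `0 ≤ i < d` of the products
`(a,i₂)(i₂,i₃)⋯(i_{m+1},b)` of consecutive cyclotomic numbers. -/
noncomputable def chainSum (d : ℕ) (c : ℕ → ℕ → ℕ) (a b m : ℕ) : ℕ :=
  ∑ v : Fin m → Fin d, chainProd c a b (List.ofFn fun i => ((v i : ℕ)))


lemma auxPowMod {ζ : ℂ} {p : ℕ} (hζ : ζ ^ p = 1) (m : ℕ) : ζ ^ (m % p) = ζ ^ m := by
  conv_rhs => rw [← Nat.mod_add_div m p, pow_add, pow_mul, hζ, one_pow, mul_one]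

lemma auxEAdd {p : ℕ} [NeZero p] {ζ : ℂ} (hζ : ζ ^ p = 1) (x y : ZMod p) :
    ζ ^ (x + y).val = ζ ^ x.val * ζ ^ y.val := by
  rw [ZMod.val_add, auxPowMod hζ, pow_add]

lemma auxESum {p : ℕ} [NeZero p] {ζ : ℂ} (hζ : ζ ^ p = 1) {ι : Type*} (s : Finset ι)
    (g : ι → ZMod p) : ζ ^ (∑ i ∈ s, g i).val = ∏ i ∈ s, ζ ^ (g i).val := by
  induction s using Finset.cons_induction with
  | empty => simp
  | cons i s hi ih => rw [Finset.sum_cons, Finset.prod_cons, auxEAdd hζ, ih]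

lemma auxSumZMod {p : ℕ} [NeZero p] (g : ℕ → ℂ) :
    ∑ t : ZMod p, g t.val = ∑ i ∈ Finset.range p, g i := by
  refine Finset.sum_nbij' (fun t => t.val) (fun i => (i : ZMod p)) ?_ ?_ ?_ ?_ ?_
  · intro t _; exact Finset.mem_range.mpr (ZMod.val_lt t)
  · intro i _; exact Finset.mem_univ _
  · intro t _; simp [ZMod.natCast_val, ZMod.cast_id]
  · intro i hi; exact ZMod.val_cast_of_lt (Finset.mem_range.mp hi)
  · intro t _; rfl

lemma auxOrth {p : ℕ} [Fact p.Prime] {ζ : ℂ} (hζ : IsPrimitiveRoot ζ p) (x : ZMod p) :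
    ∑ t : ZMod p, ζ ^ (t * x).val = if x = 0 then (p : ℂ) else 0 := by
  split_ifs with h
  · subst h
    simp [ZMod.val_zero, ZMod.card]
  · have hbij : Function.Bijective (fun t : ZMod p => t * x) :=
      (Finite.injective_iff_bijective).mp (mul_left_injective₀ h)
    have h1 : ∑ t : ZMod p, ζ ^ (t * x).val = ∑ t : ZMod p, ζ ^ t.val :=
      Fintype.sum_bijective _ hbij _ _ (fun t => rfl)
    rw [h1, auxSumZMod (fun i => ζ ^ i)]
    exact hζ.geom_sum_eq_zero (Fact.out : p.Prime).one_lt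

lemma auxSumRangeMul {M : Type*} [AddCommMonoid M] (d f : ℕ) (hd : 0 < d) (g : ℕ → M) :
    ∑ m ∈ Finset.range (d * f), g m
      = ∑ i ∈ Finset.range d, ∑ u ∈ Finset.range f, g (d * u + i) := by
  rw [← Finset.sum_product']
  refine Finset.sum_nbij' (fun m => (m % d, m / d)) (fun iu => d * iu.2 + iu.1) ?_ ?_ ?_ ?_ ?_
  · intro m hm
    rw [Finset.mem_range] at hm
    rw [Finset.mem_product, Finset.mem_range, Finset.mem_range]
    exact ⟨Nat.mod_lt _ hd, (Nat.div_lt_iff_lt_mul hd).mpr (by rwa [mul_comm])⟩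
  · intro iu hiu
    rw [Finset.mem_product, Finset.mem_range, Finset.mem_range] at hiu
    rw [Finset.mem_range]
    calc d * iu.2 + iu.1 < d * iu.2 + d := by omega
      _ = d * (iu.2 + 1) := by ring
      _ ≤ d * f := Nat.mul_le_mul_left d hiu.2
  · intro m _
    exact Nat.div_add_mod m d
  · intro iu hiu
    rw [Finset.mem_product, Finset.mem_range, Finset.mem_range] at hiu
    have h1 : (d * iu.2 + iu.1) % d = iu.1 := by
      rw [Nat.mul_add_mod, Nat.mod_eq_of_lt hiu.1]
    have h2 : (d * iu.2 + iu.1) / d = iu.2 := by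
      rw [Nat.mul_add_div hd, Nat.div_eq_of_lt hiu.1, Nat.add_zero]
    exact Prod.ext h1 h2
  · intro m _
    rw [Nat.div_add_mod m d]

/-- `N(k,a) = (1/p)·[f^k + Σ_{i=0}^{d-1} η_i^k · η_{i+α+θ}]`. -/
theorem waringCount_eq_gaussPeriods (p d f : ℕ) (hp : p.Prime) (hodd : Odd p)
    (hd : 2 ≤ d) (hdvd : d ∣ p - 1) (hf : f = (p - 1) / d)
    (ω : (ZMod p)ˣ) (hω : ∀ x : (ZMod p)ˣ, ∃ n : ℕ, ω ^ n = x)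
    (ζ : ℂ) (hζ : IsPrimitiveRoot ζ p)
    (a : (ZMod p)ˣ) (α : ℕ) (hα : ∃ m : ℕ, (a : ZMod p) = (ω : ZMod p) ^ (α + d * m))
    (k : ℕ) (hk : 1 ≤ k) :
    (waringCount p d k (a : ZMod p) : ℂ)
      = (1 / p) * ((f : ℂ) ^ k + ∑ i ∈ Finset.range d,
          (gaussPeriod p d f ω ζ i) ^ k * gaussPeriod p d f ω ζ (i + α + theta d f)) := by
  classical
  haveI : Fact p.Prime := ⟨hp⟩
  haveI : NeZero p := ⟨hp.pos.ne'⟩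
  have hp3 : 3 ≤ p := by obtain ⟨c, hc⟩ := hodd; have := hp.two_le; omega
  have hζp : ζ ^ p = 1 := hζ.pow_eq_one
  have hdf : d * f = p - 1 := by rw [hf]; exact Nat.mul_div_cancel' hdvd
  have hd0 : 0 < d := by omega
  have hf0 : 0 < f := by
    rcases Nat.eq_zero_or_pos f with h | h
    · subst h; simp at hdf; omega
    · exact h
  -- order of ω
  have horder : orderOf ω = p - 1 := by
    have h1 : ∀ x : (ZMod p)ˣ, x ∈ Subgroup.zpowers ω := by
      intro x
      obtain ⟨n, hn⟩ := hω x
      exact Subgroup.mem_zpowers_iff.mpr ⟨(n : ℤ), by rw [zpow_natCast]; exact hn⟩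
    rw [orderOf_eq_card_of_forall_mem_zpowers h1, Nat.card_eq_fintype_card, ZMod.card_units]
  have hω1 : ω ^ (p - 1) = 1 := by rw [← horder]; exact pow_orderOf_eq_one ω
  have hω1' : ((ω : ZMod p)) ^ (p - 1) = 1 := by
    rw [← Units.val_pow_eq_pow_val, hω1, Units.val_one]
  have hpow1 : ∀ j : ℕ, ((ω : ZMod p)) ^ ((p - 1) * j) = 1 := by
    intro j; rw [pow_mul, hω1', one_pow]
  have hinj : ∀ m n : ℕ, m < p - 1 → n < p - 1 →
      (ω : ZMod p) ^ m = (ω : ZMod p) ^ n → m = n := by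
    intro m n hm hn h
    have h' : ω ^ m = ω ^ n := by
      apply Units.ext
      rwa [Units.val_pow_eq_pow_val, Units.val_pow_eq_pow_val]
    have := (pow_eq_pow_iff_modEq).mp h'
    rw [horder] at this
    have h1 := this
    unfold Nat.ModEq at h1
    rwa [Nat.mod_eq_of_lt hm, Nat.mod_eq_of_lt hn] at h1
  -- the set of nonzero d-th powers
  set C : Finset (ZMod p) := (Finset.range f).image (fun u => (ω : ZMod p) ^ (d * u)) with hC
  have hinjC : ∀ u ∈ Finset.range f, ∀ v ∈ Finset.range f,
      (ω : ZMod p) ^ (d * u) = (ω : ZMod p) ^ (d * v) → u = v := by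
    intro u hu v hv h
    rw [Finset.mem_range] at hu hv
    have h1 : d * u < p - 1 := by
      rw [← hdf]; exact (mul_lt_mul_iff_right₀ hd0).mpr hu
    have h2 : d * v < p - 1 := by
      rw [← hdf]; exact (mul_lt_mul_iff_right₀ hd0).mpr hv
    exact Nat.eq_of_mul_eq_mul_left hd0 (hinj _ _ h1 h2 h)
  have hCmem : ∀ n : ℕ, (ω : ZMod p) ^ (d * n) ∈ C := by
    intro n
    rw [hC, Finset.mem_image]
    refine ⟨n % f, Finset.mem_range.mpr (Nat.mod_lt _ hf0), ?_⟩
    have h1 : d * n = d * (n % f) + (p - 1) * (n / f) := by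
      rw [← hdf]
      conv_lhs => rw [← Nat.mod_add_div n f]
      ring
    rw [h1, pow_add, hpow1, mul_one]
  have hCmem' : ∀ x : ZMod p, x ∈ C ↔ ∃ b : (ZMod p)ˣ, (b : ZMod p) ^ d = x := by
    intro x
    constructor
    · intro hx
      rw [hC, Finset.mem_image] at hx
      obtain ⟨u, _, rfl⟩ := hx
      exact ⟨ω ^ u, by rw [Units.val_pow_eq_pow_val, ← pow_mul, Nat.mul_comm]⟩
    · rintro ⟨b, rfl⟩
      obtain ⟨n, rfl⟩ := hω b
      have h1 : ((ω ^ n : (ZMod p)ˣ) : ZMod p) ^ d = (ω : ZMod p) ^ (d * n) := by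
        rw [Units.val_pow_eq_pow_val, ← pow_mul, Nat.mul_comm]
      rw [h1]
      exact hCmem n
  have hCcard : C.card = f := by
    rw [hC, Finset.card_image_of_injOn, Finset.card_range]
    intro u hu v hv h
    exact hinjC u (by simpa using hu) v (by simpa using hv) h
  -- Gauss periods as sums over C
  have hgp : ∀ m : ℕ, gaussPeriod p d f ω ζ m = ∑ c ∈ C, ζ ^ ((ω : ZMod p) ^ m * c).val := by
    intro m
    rw [hC, Finset.sum_image hinjC]
    unfold gaussPeriod
    apply Finset.sum_congr rfl
    intro u _
    congr 2
    rw [← pow_add, Nat.add_comm]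
  obtain ⟨g, hg⟩ : ∃ g, f = g + 1 := ⟨f - 1, by omega⟩
  have hff : d * (f - 1) + d = d * f := by rw [hg, Nat.add_sub_cancel]; ring
  have hSinv : ∀ t : ZMod p,
      ∑ c ∈ C, ζ ^ ((ω : ZMod p) ^ d * t * c).val = ∑ c ∈ C, ζ ^ (t * c).val := by
    intro t
    refine Finset.sum_nbij' (fun c => (ω : ZMod p) ^ d * c)
      (fun c => (ω : ZMod p) ^ (d * (f - 1)) * c) ?_ ?_ ?_ ?_ ?_
    · intro c hc
      rw [hC, Finset.mem_image] at hc
      obtain ⟨u, _, rfl⟩ := hc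
      have h1 : (ω : ZMod p) ^ d * (ω : ZMod p) ^ (d * u) = (ω : ZMod p) ^ (d * (u + 1)) := by
        rw [← pow_add]; congr 1; ring
      rw [h1]; exact hCmem _
    · intro c hc
      rw [hC, Finset.mem_image] at hc
      obtain ⟨u, _, rfl⟩ := hc
      have h1 : (ω : ZMod p) ^ (d * (f - 1)) * (ω : ZMod p) ^ (d * u)
          = (ω : ZMod p) ^ (d * (f - 1 + u)) := by
        rw [← pow_add]; congr 1; ring
      rw [h1]; exact hCmem _
    · intro c _
      rw [← mul_assoc, ← pow_add, hff, hdf, hω1', one_mul]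
    · intro c _
      rw [← mul_assoc, ← pow_add, Nat.add_comm, hff, hdf, hω1', one_mul]
    · intro c _
      congr 2
      ring
  have hShift : ∀ (n : ℕ) (t : ZMod p),
      ∑ c ∈ C, ζ ^ ((ω : ZMod p) ^ (d * n) * t * c).val = ∑ c ∈ C, ζ ^ (t * c).val := by
    intro n
    induction n with
    | zero => intro t; simp
    | succ n ih =>
      intro t
      have h1 : ∑ c ∈ C, ζ ^ ((ω : ZMod p) ^ (d * (n + 1)) * t * c).val
          = ∑ c ∈ C, ζ ^ ((ω : ZMod p) ^ (d * n) * ((ω : ZMod p) ^ d * t) * c).val := by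
        apply Finset.sum_congr rfl
        intro c _
        congr 3
        rw [show d * (n + 1) = d * n + d from by ring, pow_add]
        ring
      rw [h1, ih, hSinv]
  have hgpPer : ∀ (j n : ℕ), gaussPeriod p d f ω ζ (j + d * n) = gaussPeriod p d f ω ζ j := by
    intro j n
    rw [hgp, hgp]
    calc ∑ c ∈ C, ζ ^ ((ω : ZMod p) ^ (j + d * n) * c).val
        = ∑ c ∈ C, ζ ^ ((ω : ZMod p) ^ (d * n) * ((ω : ZMod p) ^ j) * c).val := by
          apply Finset.sum_congr rfl
          intro c _
          congr 3
          rw [pow_add]; ring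
      _ = ∑ c ∈ C, ζ ^ ((ω : ZMod p) ^ j * c).val := hShift n _
  -- counting
  set T : Finset (Fin k → ZMod p) := Fintype.piFinset (fun _ => C) with hT
  have hNcard : (waringCount p d k (a : ZMod p) : ℂ)
      = ∑ x ∈ T, (if ∑ i, x i = (a : ZMod p) then (1 : ℂ) else 0) := by
    have h1 : (Finset.univ.filter (fun t : Fin k → ZMod p =>
        (∀ i, ∃ b : (ZMod p)ˣ, ((b : ZMod p)) ^ d = t i) ∧ ∑ i, t i = (a : ZMod p)))
        = T.filter (fun x => ∑ i, x i = (a : ZMod p)) := by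
      ext x
      simp only [Finset.mem_filter, Finset.mem_univ, true_and, hT, Fintype.mem_piFinset]
      constructor
      · rintro ⟨ha, hb⟩; exact ⟨fun i => (hCmem' (x i)).mpr (ha i), hb⟩
      · rintro ⟨ha, hb⟩; exact ⟨fun i => (hCmem' (x i)).mp (ha i), hb⟩
    rw [waringCount, Nat.card_eq_fintype_card, Fintype.card_subtype, h1, Finset.card_filter]
    push_cast
    rfl
  have hmain : (p : ℂ) * (waringCount p d k (a : ZMod p) : ℂ)
      = ∑ t : ZMod p, ((∑ c ∈ C, ζ ^ (t * c).val) ^ k) * ζ ^ (t * (-(a : ZMod p))).val := by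
    rw [hNcard, Finset.mul_sum]
    have h2 : ∀ x ∈ T, (p : ℂ) * (if ∑ i, x i = (a : ZMod p) then (1 : ℂ) else 0)
        = ∑ t : ZMod p, ζ ^ (t * (∑ i, x i - (a : ZMod p))).val := by
      intro x _
      rw [auxOrth hζ]
      by_cases h : ∑ i, x i = (a : ZMod p) <;> simp [h, sub_eq_zero]
    rw [Finset.sum_congr rfl h2, Finset.sum_comm]
    apply Finset.sum_congr rfl
    intro t _
    have h3 : ∀ x : Fin k → ZMod p, ζ ^ (t * (∑ i, x i - (a : ZMod p))).val
        = (∏ i, ζ ^ (t * x i).val) * ζ ^ (t * (-(a : ZMod p))).val := by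
      intro x
      have h4 : t * (∑ i, x i - (a : ZMod p)) = (∑ i, t * x i) + t * (-(a : ZMod p)) := by
        rw [mul_sub, sub_eq_add_neg, ← mul_neg, Finset.mul_sum]
      rw [h4, auxEAdd hζp, auxESum hζp]
    rw [Finset.sum_congr rfl (fun x _ => h3 x), ← Finset.sum_mul]
    congr 1
    rw [show ((∑ c ∈ C, ζ ^ (t * c).val) ^ k) = ∏ _i : Fin k, (∑ c ∈ C, ζ ^ (t * c).val) from by
        rw [Finset.prod_const, Finset.card_univ, Fintype.card_fin],
      Finset.prod_univ_sum]
  -- split off t = 0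
  have hzeroterm : ((∑ c ∈ C, ζ ^ ((0 : ZMod p) * c).val) ^ k)
      * ζ ^ ((0 : ZMod p) * (-(a : ZMod p))).val = (f : ℂ) ^ k := by
    have h1 : ∀ c : ZMod p, ((0 : ZMod p) * c).val = 0 := by
      intro c; rw [zero_mul, ZMod.val_zero]
    rw [h1]
    simp [h1, hCcard]
  have hsplit : ∑ t : ZMod p, ((∑ c ∈ C, ζ ^ (t * c).val) ^ k) * ζ ^ (t * (-(a : ZMod p))).val
      = (f : ℂ) ^ k + ∑ t ∈ Finset.univ.erase (0 : ZMod p),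
          ((∑ c ∈ C, ζ ^ (t * c).val) ^ k) * ζ ^ (t * (-(a : ZMod p))).val := by
    rw [← Finset.add_sum_erase _ _ (Finset.mem_univ (0 : ZMod p)), hzeroterm]
  -- nonzero t as powers of ω
  have himg : (Finset.univ.erase (0 : ZMod p))
      = (Finset.range (p - 1)).image (fun m => (ω : ZMod p) ^ m) := by
    ext x
    simp only [Finset.mem_erase, Finset.mem_univ, and_true, Finset.mem_image, Finset.mem_range]
    constructor
    · intro hx
      obtain ⟨u, rfl⟩ := (isUnit_iff_ne_zero.mpr hx)
      obtain ⟨n, rfl⟩ := hω u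
      refine ⟨n % (p - 1), Nat.mod_lt _ (by omega), ?_⟩
      rw [Units.val_pow_eq_pow_val]
      conv_rhs => rw [← Nat.mod_add_div n (p - 1)]
      rw [pow_add, pow_mul, hω1', one_pow, mul_one]
    · rintro ⟨m, _, rfl⟩
      exact pow_ne_zero _ (Units.ne_zero ω)
  have hinjP : ∀ m ∈ Finset.range (p - 1), ∀ n ∈ Finset.range (p - 1),
      (ω : ZMod p) ^ m = (ω : ZMod p) ^ n → m = n := by
    intro m hm n hn h
    exact hinj m n (Finset.mem_range.mp hm) (Finset.mem_range.mp hn) h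
  -- the exponent of -a
  obtain ⟨m₀, hm₀⟩ := hα
  obtain ⟨cp, hcp⟩ := hodd
  have hneg1 : (-1 : ZMod p) = (ω : ZMod p) ^ ((p - 1) / 2) := by
    set x : ZMod p := (ω : ZMod p) ^ ((p - 1) / 2) with hx
    have hsq : x ^ 2 = 1 := by
      rw [hx, ← pow_mul, show (p - 1) / 2 * 2 = p - 1 from by omega, hω1']
    have hne : x ≠ 1 := by
      intro hone
      have h0 : (ω : ZMod p) ^ ((p - 1) / 2) = (ω : ZMod p) ^ 0 := by
        rw [pow_zero]; exact hone
      have := hinj _ _ (by omega) (by omega) h0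
      omega
    have hfac : (x - 1) * (x + 1) = 0 := by ring_nf; linear_combination hsq
    rcases mul_eq_zero.mp hfac with h | h
    · exact absurd (sub_eq_zero.mp h) hne
    · have : x = -1 := by linear_combination h
      exact this.symm
  have hMex : ∃ M : ℕ, (p - 1) / 2 + (α + d * m₀) = α + theta d f + d * M := by
    by_cases hEf : Even f
    · obtain ⟨gg, hgg⟩ := id hEf
      have hhalf : (p - 1) / 2 = d * gg := by
        have h1 : p - 1 = 2 * (d * gg) := by rw [← hdf, hgg]; ring
        omega
      refine ⟨gg + m₀, ?_⟩
      simp only [theta, if_pos hEf]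
      rw [hhalf, Nat.mul_add]
      omega
    · obtain ⟨gg, hgg⟩ := Nat.not_even_iff_odd.mp hEf
      have hd2 : 2 ∣ d := by
        have h2 : 2 ∣ d * f := by rw [hdf]; omega
        rcases (Nat.Prime.dvd_mul Nat.prime_two).mp h2 with h | h
        · exact h
        · exfalso; omega
      obtain ⟨e, he⟩ := hd2
      have hhalf : (p - 1) / 2 = e + d * gg := by
        have h1 : p - 1 = 2 * (e + d * gg) := by rw [← hdf, hgg, he]; ring
        omega
      refine ⟨gg + m₀, ?_⟩
      simp only [theta, if_neg hEf]
      rw [hhalf, Nat.mul_add, show d / 2 = e from by omega]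
      omega
  obtain ⟨M, hM⟩ := hMex
  have hnega : -(a : ZMod p) = (ω : ZMod p) ^ (α + theta d f + d * M) := by
    rw [← hM, pow_add, ← hneg1, hm₀]
    ring
  -- assemble the nonzero part
  have hnonzero : ∑ t ∈ Finset.univ.erase (0 : ZMod p),
        ((∑ c ∈ C, ζ ^ (t * c).val) ^ k) * ζ ^ (t * (-(a : ZMod p))).val
      = ∑ i ∈ Finset.range d,
          (gaussPeriod p d f ω ζ i) ^ k * gaussPeriod p d f ω ζ (i + α + theta d f) := by
    rw [himg, Finset.sum_image hinjP, ← hdf,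
      auxSumRangeMul d f hd0 (fun m => ((∑ c ∈ C, ζ ^ ((ω : ZMod p) ^ m * c).val) ^ k)
        * ζ ^ ((ω : ZMod p) ^ m * (-(a : ZMod p))).val)]
    apply Finset.sum_congr rfl
    intro i _
    have h5 : ∀ u ∈ Finset.range f,
        ((∑ c ∈ C, ζ ^ ((ω : ZMod p) ^ (d * u + i) * c).val) ^ k)
          * ζ ^ ((ω : ZMod p) ^ (d * u + i) * (-(a : ZMod p))).val
        = (gaussPeriod p d f ω ζ i) ^ k
          * ζ ^ (((ω : ZMod p) ^ (d * u + (i + α + theta d f + d * M))).val) := by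
      intro u _
      congr 2
      · rw [show d * u + i = i + d * u from by ring, ← hgp, hgpPer]
      · rw [hnega, ← pow_add]
        congr 2
        ring
    rw [Finset.sum_congr rfl h5, ← Finset.mul_sum]
    congr 1
    have h6 : ∑ u ∈ Finset.range f, ζ ^ (((ω : ZMod p) ^ (d * u + (i + α + theta d f + d * M))).val)
        = gaussPeriod p d f ω ζ (i + α + theta d f + d * M) := rfl
    rw [h6, show i + α + theta d f + d * M = (i + α + theta d f) + d * M from by ring,
      hgpPer]
  -- finish
  have hp0 : (p : ℂ) ≠ 0 := Nat.cast_ne_zero.mpr hp.pos.ne'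
  have hfinal : (p : ℂ) * (waringCount p d k (a : ZMod p) : ℂ)
      = (f : ℂ) ^ k + ∑ i ∈ Finset.range d,
          (gaussPeriod p d f ω ζ i) ^ k * gaussPeriod p d f ω ζ (i + α + theta d f) := by
    rw [hmain, hsplit, hnonzero]
  rw [one_div, inv_mul_eq_div, eq_div_iff hp0]
  linear_combination hfinal
end

section
/- Let p be an odd prime, d ≥ 2 with d ∣ p−1, f = (p−1)/d. For a ∈ 𝔽_p^* with α ≡ ind_ω(a) mod d, the least k such that a is a sum of k nonzero d-th powers in 𝔽_p equals min{ k ≥ 1 : f^k + Σ_{i=0}^{d−1} η_i^k · η_{i+α+θ} ≠ 0 }. -/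
open Finset

/-- The standard additive character. -/
noncomputable def EE (p : ℕ) (ζ : ℂ) (x : ZMod p) : ℂ := ζ ^ x.val

lemma zeta_pow_mod {p : ℕ} {ζ : ℂ} (hζ : IsPrimitiveRoot ζ p) (m : ℕ) :
    ζ ^ m = ζ ^ (m % p) := by
  conv_lhs => rw [← Nat.div_add_mod m p, pow_add, pow_mul, hζ.pow_eq_one, one_pow, one_mul]

lemma EE_zero (p : ℕ) (ζ : ℂ) : EE p ζ 0 = 1 := by simp [EE]

lemma EE_add {p : ℕ} {ζ : ℂ} [NeZero p] (hζ : IsPrimitiveRoot ζ p) (x y : ZMod p) :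
    EE p ζ (x + y) = EE p ζ x * EE p ζ y := by
  rw [EE, ZMod.val_add, ← zeta_pow_mod hζ, pow_add]; rfl

lemma EE_sum {p : ℕ} {ζ : ℂ} [NeZero p] (hζ : IsPrimitiveRoot ζ p)
    {ι : Type*} (s : Finset ι) (g : ι → ZMod p) :
    EE p ζ (∑ i ∈ s, g i) = ∏ i ∈ s, EE p ζ (g i) := by
  classical
  induction s using Finset.induction with
  | empty => simpa using EE_zero p ζ
  | insert _ _ h ih => rw [Finset.sum_insert h, Finset.prod_insert h, EE_add hζ, ih]

lemma sum_EE {p : ℕ} {ζ : ℂ} [NeZero p] (hp : p.Prime) (hζ : IsPrimitiveRoot ζ p) :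
    ∑ x : ZMod p, EE p ζ x = 0 := by
  haveI : NeZero p := ⟨hp.ne_zero⟩
  haveI : Fact p.Prime := ⟨hp⟩
  have h1 : ∑ x : ZMod p, EE p ζ x = ∑ j ∈ Finset.range p, ζ ^ j := by
    refine Finset.sum_nbij' (fun x => x.val) (fun j => (j : ZMod p)) ?_ ?_ ?_ ?_ ?_
    · intro x _; exact Finset.mem_range.2 (ZMod.val_lt x)
    · intro j _; exact Finset.mem_univ _
    · intro x _; exact ZMod.natCast_rightInverse x
    · intro j hj; exact ZMod.val_cast_of_lt (Finset.mem_range.1 hj)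
    · intro x _; rfl
  rw [h1, hζ.geom_sum_eq_zero hp.one_lt]

lemma sum_EE_mul {p : ℕ} {ζ : ℂ} [NeZero p] (hp : p.Prime) (hζ : IsPrimitiveRoot ζ p) (t : ZMod p) :
    ∑ x : ZMod p, EE p ζ (t * x) = if t = 0 then (p : ℂ) else 0 := by
  haveI : NeZero p := ⟨hp.ne_zero⟩
  haveI : Fact p.Prime := ⟨hp⟩
  by_cases ht : t = 0
  · simp [ht, EE_zero, ZMod.card]
  · rw [if_neg ht, ← sum_EE hp hζ]
    exact Fintype.sum_bijective (fun x => t * x) (mulLeft_bijective₀ t ht) _ _ (fun x => rfl)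

/-- Sum shift for an `f`-periodic function. -/
lemma sum_shift {f : ℕ} (F : ℕ → ℂ) (hF : ∀ m, F (m + f) = F m) (s : ℕ) :
    ∑ j ∈ Finset.range f, F (s + j) = ∑ j ∈ Finset.range f, F j := by
  induction s with
  | zero => simp
  | succ s ih =>
    have h1 : ∑ j ∈ Finset.range (f + 1), F (s + j)
        = ∑ j ∈ Finset.range f, F (s + j) + F (s + f) := Finset.sum_range_succ _ _
    have h2 : ∑ j ∈ Finset.range (f + 1), F (s + j)
        = ∑ j ∈ Finset.range f, F (s + (j + 1)) + F (s + 0) := Finset.sum_range_succ' _ _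
    have h3 : ∀ j, F (s + (j + 1)) = F (s + 1 + j) := by intro j; ring_nf
    have h4 : F (s + f) = F (s + 0) := by simpa using hF s
    calc ∑ j ∈ Finset.range f, F (s + 1 + j)
        = ∑ j ∈ Finset.range f, F (s + (j + 1)) := by
          exact Finset.sum_congr rfl fun j _ => by rw [show s+1+j = s+(j+1) from by omega]
      _ = ∑ j ∈ Finset.range f, F (s + j) := by
          have := h1.symm.trans h2
          rw [h4] at this
          exact (add_right_cancel this).symm
      _ = _ := ih

section main
variable {p d f : ℕ} {ω : (ZMod p)ˣ} {ζ : ℂ}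

lemma upow (n : ℕ) : (ω : ZMod p) ^ n = ((ω ^ n : (ZMod p)ˣ) : ZMod p) :=
  (Units.val_pow_eq_pow_val ω n).symm

lemma omega_pow_congr (horder : orderOf ω = p - 1) {m n : ℕ}
    (h : m % (p - 1) = n % (p - 1)) : (ω : ZMod p) ^ m = (ω : ZMod p) ^ n := by
  rw [upow, upow]
  congr 1
  exact pow_eq_pow_iff_modEq.2 (by rw [horder]; exact h)

/-- Master Gauss period lemma: reduce any shift modulo `d`. -/
lemma gp_master (hdf : d * f = p - 1) (horder : orderOf ω = p - 1) (c : ℕ) :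
    gaussPeriod p d f ω ζ c = gaussPeriod p d f ω ζ (c % d) := by
  set F : ℕ → ℂ := fun m => ζ ^ (((ω : ZMod p) ^ (d * m + c % d)).val) with hF
  have hper : ∀ m, F (m + f) = F m := by
    intro m
    simp only [hF]
    congr 1
    refine congrArg _ (omega_pow_congr horder ?_)
    have h2 : d * (m + f) + c % d = (d * m + c % d) + (p - 1) * 1 := by
      rw [← hdf]; ring
    rw [h2, Nat.add_mul_mod_self_left]
  have h1 : gaussPeriod p d f ω ζ c = ∑ u ∈ Finset.range f, F (c / d + u) := by
    refine Finset.sum_congr rfl fun u _ => ?_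
    simp only [hF]
    have h3 : d * u + c = d * (c / d + u) + c % d := by
      conv_lhs => rw [← Nat.div_add_mod c d]
      ring
    rw [h3]
  rw [h1, sum_shift F hper (c / d)]
  rfl

/-- Decompose a sum over `ZMod p` into zero plus the `ω`-power classes. -/
lemma sum_decomp [NeZero p] (hp : p.Prime) (hd0 : 0 < d) (hdf : d * f = p - 1)
    (horder : orderOf ω = p - 1) (hω : ∀ x : (ZMod p)ˣ, ∃ n : ℕ, ω ^ n = x)
    (g : ZMod p → ℂ) :
    ∑ t : ZMod p, g t
      = g 0 + ∑ i ∈ Finset.range d, ∑ u ∈ Finset.range f, g ((ω : ZMod p) ^ (d * u + i)) := by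
  haveI : Fact p.Prime := ⟨hp⟩
  have hp1 : 1 ≤ p - 1 := by have := hp.two_le; omega
  classical
  have h0 : ∑ t : ZMod p, g t = g 0 + ∑ t ∈ Finset.univ.erase (0 : ZMod p), g t :=
    (Finset.add_sum_erase _ g (Finset.mem_univ 0)).symm
  rw [h0]
  congr 1
  rw [← Finset.sum_product']
  refine (Finset.sum_nbij (fun x => (ω : ZMod p) ^ (d * x.2 + x.1)) ?_ ?_ ?_ ?_).symm
  · rintro ⟨i, u⟩ h
    simp only [Finset.mem_product, Finset.mem_range] at h
    refine Finset.mem_erase.2 ⟨?_, Finset.mem_univ _⟩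
    show (ω : ZMod p) ^ (d * u + i) ≠ 0
    rw [upow]
    exact Units.ne_zero _
  · rintro ⟨i, u⟩ h ⟨i', u'⟩ h' heq
    simp only [Finset.coe_product, Set.mem_prod, Finset.mem_coe, Finset.mem_range] at h h'
    have heq1 : (ω : ZMod p) ^ (d * u + i) = (ω : ZMod p) ^ (d * u' + i') := heq
    rw [upow, upow] at heq1
    have heq2 : ω ^ (d * u + i) = ω ^ (d * u' + i') := Units.ext heq1
    have hmod := pow_eq_pow_iff_modEq.1 heq2
    rw [horder] at hmod
    have hlt : d * u + i < p - 1 := by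
      rw [← hdf]
      calc d * u + i < d * u + d := by omega
        _ = d * (u + 1) := by ring
        _ ≤ d * f := Nat.mul_le_mul_left d (by omega : u + 1 ≤ f)
    have hlt' : d * u' + i' < p - 1 := by
      rw [← hdf]
      calc d * u' + i' < d * u' + d := by omega
        _ = d * (u' + 1) := by ring
        _ ≤ d * f := Nat.mul_le_mul_left d (by omega : u' + 1 ≤ f)
    have heq3 : d * u + i = d * u' + i' := by
      have := hmod
      unfold Nat.ModEq at this
      rwa [Nat.mod_eq_of_lt hlt, Nat.mod_eq_of_lt hlt'] at this
    have hi : i = i' := by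
      have h1 : (d * u + i) % d = i := by
        rw [Nat.mul_comm, Nat.add_comm, Nat.add_mul_mod_self_right, Nat.mod_eq_of_lt h.1]
      have h2 : (d * u' + i') % d = i' := by
        rw [Nat.mul_comm, Nat.add_comm, Nat.add_mul_mod_self_right, Nat.mod_eq_of_lt h'.1]
      rw [← h1, ← h2, heq3]
    have hu : u = u' := by
      have : d * u = d * u' := by omega
      exact Nat.eq_of_mul_eq_mul_left hd0 this
    simp [hi, hu]
  · intro t ht
    have ht0 : t ≠ 0 := (Finset.mem_erase.1 ht).1
    obtain ⟨n, hn⟩ := hω (Units.mk0 t ht0)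
    set n' := n % (p - 1) with hn'
    have hn'lt : n' < p - 1 := Nat.mod_lt _ (by omega)
    refine ⟨(n' % d, n' / d), ?_, ?_⟩
    · simp only [Finset.coe_product, Set.mem_prod, Finset.mem_coe, Finset.mem_range]
      constructor
      · exact Nat.mod_lt _ hd0
      · exact Nat.div_lt_of_lt_mul (by rwa [hdf])
    · have he : d * (n' / d) + n' % d = n' := Nat.div_add_mod n' d
      have : (ω : ZMod p) ^ (d * (n' / d) + n' % d) = (ω : ZMod p) ^ n := by
        rw [he]
        exact omega_pow_congr horder (by simp [hn', Nat.mod_mod_of_dvd])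
      show (ω : ZMod p) ^ (d * (n' / d) + n' % d) = t
      rw [this, upow, hn, Units.val_mk0]
  · intro x _; rfl

/-- `-1 = ω ^ ((p-1)/2)`. -/
lemma neg_one_pow (hp : p.Prime) (hodd : Odd p) (horder : orderOf ω = p - 1) :
    (-1 : ZMod p) = (ω : ZMod p) ^ ((p - 1) / 2) := by
  haveI : Fact p.Prime := ⟨hp⟩
  have hp3 : 3 ≤ p := by
    rcases hodd with ⟨m, hm⟩
    have := hp.two_le
    omega
  set e := (p - 1) / 2 with he
  have h2e : 2 * e = p - 1 := by
    rcases hodd with ⟨m, hm⟩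
    omega
  have hsq : ((ω : ZMod p) ^ e) * ((ω : ZMod p) ^ e) = 1 := by
    rw [← pow_add]
    have : e + e = p - 1 := by omega
    rw [this, upow]
    have : ω ^ (p - 1) = 1 := by rw [← horder]; exact pow_orderOf_eq_one ω
    rw [this, Units.val_one]
  have hne : (ω : ZMod p) ^ e ≠ 1 := by
    intro h
    rw [upow] at h
    have h1 : ω ^ e = 1 := Units.ext h
    have := orderOf_dvd_of_pow_eq_one h1
    rw [horder] at this
    have he0 : 0 < e := by omega
    have := Nat.le_of_dvd he0 this
    omega
  rcases mul_self_eq_one_iff.1 hsq with h | h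
  · exact absurd h hne
  · exact h.symm

/-- Modular index arithmetic: `(p-1)/2 + d*m ≡ θ (mod d)`. -/
lemma half_mod (hd0 : 0 < d) (hdf : d * f = p - 1) (hp1 : 1 ≤ p - 1) (hpodd : Even (p - 1))
    (c m : ℕ) : (c + (p - 1) / 2 + d * m) % d = (c + theta d f) % d := by
  have hf0 : 0 < f := by
    rcases Nat.eq_zero_or_pos f with h | h
    · subst h; simp at hdf; omega
    · exact h
  rcases Nat.even_or_odd f with hf | hf
  · -- f even
    rcases hf with ⟨f', hf'⟩
    have he : (p - 1) / 2 = d * f' := by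
      have h5 : p - 1 = 2 * (d * f') := by rw [← hdf, hf']; ring
      omega
    rw [theta, if_pos ⟨f', hf'⟩, Nat.add_zero, he]
    rw [show c + d * f' + d * m = c + d * (f' + m) by ring, Nat.add_mul_mod_self_left]
  · -- f odd, so d even
    have hdeven : Even d := by
      rcases Nat.even_or_odd d with h | h
      · exact h
      · exfalso
        have : Odd (d * f) := h.mul hf
        rw [hdf] at this
        exact (Nat.not_even_iff_odd.2 this) hpodd
    rcases hdeven with ⟨d', hd'⟩
    rcases hf with ⟨t, ht⟩
    have hd'0 : 0 < d' := by omega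
    have he : (p - 1)/2 = d' * (2 * t + 1) := by
      have h5 : p - 1 = 2 * (d' * (2 * t + 1)) := by rw [← hdf, hd', ht]; ring
      omega
    have hth : theta d f = d' := by
      rw [theta, if_neg (by rw [ht]; simp [Nat.even_add_one, parity_simps]), hd']
      omega
    rw [he, hth]
    have h1 : c + d' * (2 * t + 1) + d * m = (c + d') + d * (m + t) := by
      rw [hd']; ring
    rw [h1, Nat.add_mul_mod_self_left]

lemma count_formula [NeZero p] (hp : p.Prime) (hζ : IsPrimitiveRoot ζ p) (hodd : Odd p)
    (hd0 : 0 < d) (hdf : d * f = p - 1) (horder : orderOf ω = p - 1)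
    (hω : ∀ x : (ZMod p)ˣ, ∃ n : ℕ, ω ^ n = x)
    (a : (ZMod p)ˣ) (α m : ℕ) (hα : (a : ZMod p) = (ω : ZMod p) ^ (α + d * m)) (k : ℕ) :
    (f : ℂ) ^ k + ∑ i ∈ Finset.range d,
        (gaussPeriod p d f ω ζ i) ^ k * gaussPeriod p d f ω ζ (i + α + theta d f)
      = (p : ℂ) * ((Finset.univ.filter (fun v : Fin k → Fin f =>
          ∑ j, (ω : ZMod p) ^ (d * ((v j : ℕ))) = (a : ZMod p))).card) := by
  classical
  have hp1 : 1 ≤ p - 1 := by have := hp.two_le; omega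
  have hpodd : Even (p - 1) := by rcases hodd with ⟨t, ht⟩; exact ⟨t, by omega⟩
  set S : ZMod p → ℂ := fun t => ∑ u ∈ Finset.range f, EE p ζ (t * (ω : ZMod p) ^ (d * u))
    with hS
  -- Step 1: RHS as a sum of indicators
  have step1 : (p : ℂ) * ((Finset.univ.filter (fun v : Fin k → Fin f =>
          ∑ j, (ω : ZMod p) ^ (d * ((v j : ℕ))) = (a : ZMod p))).card)
      = ∑ v : Fin k → Fin f,
          (if (∑ j, (ω : ZMod p) ^ (d * ((v j : ℕ))) = (a : ZMod p)) then (p : ℂ) else 0) := by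
    rw [Finset.sum_ite, Finset.sum_const, Finset.sum_const, smul_zero, add_zero,
      nsmul_eq_mul, mul_comm]
  -- Step 2: indicator as character sum
  have step2 : ∀ v : Fin k → Fin f,
      (if (∑ j, (ω : ZMod p) ^ (d * ((v j : ℕ))) = (a : ZMod p)) then (p : ℂ) else 0)
      = ∑ t : ZMod p, EE p ζ ((∑ j, (ω : ZMod p) ^ (d * ((v j : ℕ))) - (a : ZMod p)) * t) := by
    intro v
    rw [sum_EE_mul hp hζ]
    by_cases h : ∑ j, (ω : ZMod p) ^ (d * ((v j : ℕ))) = (a : ZMod p)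
    · rw [if_pos h, if_pos (sub_eq_zero.2 h)]
    · rw [if_neg h, if_neg (fun hc => h (sub_eq_zero.1 hc))]
  -- Step 3: expand the character and collect powers
  have step3 : ∀ (t : ZMod p) (v : Fin k → Fin f),
      EE p ζ ((∑ j, (ω : ZMod p) ^ (d * ((v j : ℕ))) - (a : ZMod p)) * t)
      = (∏ j, EE p ζ (t * (ω : ZMod p) ^ (d * ((v j : ℕ))))) * EE p ζ (t * (-(a : ZMod p))) := by
    intro t v
    have h1 : (∑ j, (ω : ZMod p) ^ (d * ((v j : ℕ))) - (a : ZMod p)) * t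
        = (∑ j, t * (ω : ZMod p) ^ (d * ((v j : ℕ)))) + t * (-(a : ZMod p)) := by
      have e1 : (∑ j, (ω : ZMod p) ^ (d * ((v j : ℕ)))) * t
          = ∑ j, t * (ω : ZMod p) ^ (d * ((v j : ℕ))) := by
        rw [Finset.sum_mul]; exact Finset.sum_congr rfl fun j _ => mul_comm _ _
      rw [sub_mul, e1]; ring
    rw [h1, EE_add hζ, EE_sum hζ]
  have step4 : ∀ t : ZMod p,
      ∑ v : Fin k → Fin f, (∏ j, EE p ζ (t * (ω : ZMod p) ^ (d * ((v j : ℕ)))))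
        = (S t) ^ k := by
    intro t
    rw [hS]
    have := Fintype.sum_pow (fun u : Fin f => EE p ζ (t * (ω : ZMod p) ^ (d * (u : ℕ)))) k
    rw [← this, Fin.sum_univ_eq_sum_range (fun u => EE p ζ (t * (ω : ZMod p) ^ (d * u))) f]
  -- Combine steps 1-4
  have main1 : (p : ℂ) * ((Finset.univ.filter (fun v : Fin k → Fin f =>
          ∑ j, (ω : ZMod p) ^ (d * ((v j : ℕ))) = (a : ZMod p))).card)
      = ∑ t : ZMod p, (S t) ^ k * EE p ζ (t * (-(a : ZMod p))) := by
    rw [step1]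
    rw [Finset.sum_congr rfl (fun v _ => step2 v)]
    rw [Finset.sum_comm]
    refine Finset.sum_congr rfl fun t _ => ?_
    rw [Finset.sum_congr rfl (fun v (_ : v ∈ Finset.univ) => step3 t v), ← Finset.sum_mul,
      step4 t]
  rw [main1, sum_decomp hp hd0 hdf horder hω]
  -- the zero term
  have hzero : (S 0) ^ k * EE p ζ (0 * (-(a : ZMod p))) = (f : ℂ) ^ k := by
    have h1 : S 0 = (f : ℂ) := by
      rw [hS]
      simp only [zero_mul]
      rw [Finset.sum_congr rfl (fun u _ => EE_zero p ζ), Finset.sum_const, Finset.card_range,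
        nsmul_eq_mul, mul_one]
    rw [h1, zero_mul, EE_zero, mul_one]
  rw [hzero]
  congr 1
  -- the nonzero terms
  refine Finset.sum_congr rfl fun i hi => ?_
  have hi' : i < d := Finset.mem_range.1 hi
  -- inner sum over u
  have hSi : ∀ u, S ((ω : ZMod p) ^ (d * u + i)) = gaussPeriod p d f ω ζ i := by
    intro u
    have h1 : ∀ u' : ℕ, (ω : ZMod p) ^ (d * u + i) * (ω : ZMod p) ^ (d * u')
        = (ω : ZMod p) ^ (d * u' + (d * u + i)) := by
      intro u'; rw [← pow_add]; congr 1; ring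
    have h2 : S ((ω : ZMod p) ^ (d * u + i)) = gaussPeriod p d f ω ζ (d * u + i) := by
      rw [hS]
      refine Finset.sum_congr rfl fun u' _ => ?_
      show EE p ζ _ = _
      rw [h1 u']
      rfl
    rw [h2, gp_master hdf horder]
    congr 1
    rw [Nat.mul_comm, Nat.add_comm, Nat.add_mul_mod_self_right, Nat.mod_eq_of_lt hi']
  have hTi : ∑ u ∈ Finset.range f, EE p ζ ((ω : ZMod p) ^ (d * u + i) * (-(a : ZMod p)))
      = gaussPeriod p d f ω ζ (i + α + theta d f) := by
    have hneg : (-(a : ZMod p)) = (ω : ZMod p) ^ ((p - 1) / 2 + (α + d * m)) := by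
      rw [pow_add, ← neg_one_pow hp hodd horder, hα]; ring
    have h1 : ∀ u : ℕ, (ω : ZMod p) ^ (d * u + i) * (-(a : ZMod p))
        = (ω : ZMod p) ^ (d * u + (i + α + (p - 1) / 2 + d * m)) := by
      intro u; rw [hneg, ← pow_add]; congr 1; ring
    have h2 : ∑ u ∈ Finset.range f, EE p ζ ((ω : ZMod p) ^ (d * u + i) * (-(a : ZMod p)))
        = gaussPeriod p d f ω ζ (i + α + (p - 1) / 2 + d * m) := by
      refine Finset.sum_congr rfl fun u _ => ?_
      show EE p ζ _ = _
      rw [h1 u]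
      rfl
    rw [h2, gp_master hdf horder, gp_master hdf horder (c := i + α + theta d f)]
    congr 1
    exact half_mod hd0 hdf hp1 hpodd (i + α) m
  rw [← hTi, Finset.mul_sum]
  refine Finset.sum_congr rfl fun u _ => ?_
  rw [hSi u]

lemma rep_iff (hd0 : 0 < d) (hf0 : 0 < f) (hdf : d * f = p - 1)
    (horder : orderOf ω = p - 1) (hω : ∀ x : (ZMod p)ˣ, ∃ n : ℕ, ω ^ n = x)
    (a : (ZMod p)ˣ) (k : ℕ) :
    (∃ u : Fin k → (ZMod p)ˣ, (a : ZMod p) = ∑ i, ((u i : ZMod p)) ^ d)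
      ↔ ∃ v : Fin k → Fin f, ∑ j, (ω : ZMod p) ^ (d * ((v j : ℕ))) = (a : ZMod p) := by
  constructor
  · rintro ⟨u, hu⟩
    choose n hn using fun i => hω (u i)
    refine ⟨fun i => ⟨n i % f, Nat.mod_lt _ hf0⟩, ?_⟩
    rw [hu]
    refine Finset.sum_congr rfl fun j _ => ?_
    have h1 : ((u j : ZMod p)) ^ d = (ω : ZMod p) ^ (n j * d) := by
      rw [← hn j, ← Units.val_pow_eq_pow_val, ← pow_mul]
      exact (upow _).symm
    rw [h1]
    refine (omega_pow_congr horder ?_).symm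
    have h2 : n j * d = d * (n j % f) + (p - 1) * (n j / f) := by
      rw [← hdf]
      conv_lhs => rw [← Nat.mod_add_div (n j) f]
      ring
    rw [h2, Nat.add_mul_mod_self_left]
  · rintro ⟨v, hv⟩
    refine ⟨fun i => ω ^ ((v i : ℕ)), ?_⟩
    rw [← hv]
    refine Finset.sum_congr rfl fun j _ => ?_
    calc (ω : ZMod p) ^ (d * ((v j : ℕ))) = ((ω ^ (d * ((v j : ℕ))) : (ZMod p)ˣ) : ZMod p) :=
          upow _
      _ = (((ω ^ ((v j : ℕ))) ^ d : (ZMod p)ˣ) : ZMod p) := by rw [← pow_mul, Nat.mul_comm]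
      _ = ((ω ^ ((v j : ℕ)) : (ZMod p)ˣ) : ZMod p) ^ d := Units.val_pow_eq_pow_val _ _

end main


/-- `s_d(p,a) = min{k ≥ 1 : f^k + Σ_{i=0}^{d-1} η_i^k·η_{i+α+θ} ≠ 0}`. -/
theorem sWaring_eq_sInf_gaussPeriods (p d f : ℕ) (hp : p.Prime) (hodd : Odd p)
    (hd : 2 ≤ d) (hdvd : d ∣ p - 1) (hf : f = (p - 1) / d)
    (ω : (ZMod p)ˣ) (hω : ∀ x : (ZMod p)ˣ, ∃ n : ℕ, ω ^ n = x)
    (ζ : ℂ) (hζ : IsPrimitiveRoot ζ p)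
    (a : (ZMod p)ˣ) (α : ℕ) (hα : ∃ m : ℕ, (a : ZMod p) = (ω : ZMod p) ^ (α + d * m)) :
    sWaring p d (a : ZMod p)
      = sInf {k | 1 ≤ k ∧ (f : ℂ) ^ k + ∑ i ∈ Finset.range d,
          (gaussPeriod p d f ω ζ i) ^ k * gaussPeriod p d f ω ζ (i + α + theta d f) ≠ 0} := by
  classical
  haveI : Fact p.Prime := ⟨hp⟩
  haveI : NeZero p := ⟨hp.ne_zero⟩
  have hd0 : 0 < d := by omega
  have hdf : d * f = p - 1 := by rw [hf]; exact Nat.mul_div_cancel' hdvd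
  have hp3 : 3 ≤ p := by
    rcases hodd with ⟨t, ht⟩; have := hp.two_le; omega
  have hf0 : 0 < f := by
    rcases Nat.eq_zero_or_pos f with h | h
    · exfalso; rw [h, Nat.mul_zero] at hdf; omega
    · exact h
  have horder : orderOf ω = p - 1 := by
    have h1 : ∀ x : (ZMod p)ˣ, x ∈ Subgroup.zpowers ω := by
      intro x
      obtain ⟨n, hn⟩ := hω x
      exact ⟨(n : ℤ), by simpa using hn⟩
    rw [orderOf_eq_card_of_forall_mem_zpowers h1, Nat.card_eq_fintype_card, ZMod.card_units_eq_totient,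
      Nat.totient_prime hp]
  obtain ⟨m, hm⟩ := hα
  rw [sWaring]
  congr 1
  ext k
  simp only [Set.mem_setOf_eq]
  refine and_congr_right fun _ => ?_
  rw [rep_iff hd0 hf0 hdf horder hω a k]
  have hcount := count_formula hp hζ hodd hd0 hdf horder hω a α m hm k
  rw [hcount]
  have hp0 : (p : ℂ) ≠ 0 := Nat.cast_ne_zero.2 hp.ne_zero
  constructor
  · rintro ⟨v, hv⟩ hzero
    rcases mul_eq_zero.1 hzero with h | h
    · exact hp0 h
    · have : (Finset.univ.filter (fun v : Fin k → Fin f =>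
          ∑ j, (ω : ZMod p) ^ (d * ((v j : ℕ))) = (a : ZMod p))).Nonempty :=
        ⟨v, Finset.mem_filter.2 ⟨Finset.mem_univ v, hv⟩⟩
      rw [Nat.cast_eq_zero, Finset.card_eq_zero] at h
      rw [h] at this
      exact Finset.not_nonempty_empty this
  · intro hne
    have hcard : (Finset.univ.filter (fun v : Fin k → Fin f =>
        ∑ j, (ω : ZMod p) ^ (d * ((v j : ℕ))) = (a : ZMod p))).Nonempty := by
      rw [← Finset.card_pos]
      by_contra h
      push_neg at h
      rw [Nat.le_zero] at h
      apply hne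
      rw [h, Nat.cast_zero, mul_zero]
    obtain ⟨v, hv⟩ := hcard
    exact ⟨v, (Finset.mem_filter.1 hv).2⟩
end

section
/- Let p be an odd prime, d ≥ 2 with d ∣ p−1, f = (p−1)/d. For all 0 ≤ k,l ≤ d−1: η_l · η_{l+k} = Σ_{h=0}^{d−1} (k,h) · η_{l+h} + f·δ_{θk}, where δ_{θk} is Kronecker's delta and all period indices are taken mod d. -/
open Finset

private lemma GP.pow_mod_eq {M : Type*} [Monoid M] {x : M} {n : ℕ} (hn : x ^ n = 1) (m : ℕ) :
    x ^ (m % n) = x ^ m := by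
  conv_rhs => rw [← Nat.div_add_mod m n, pow_add, pow_mul, hn, one_pow, one_mul]

private lemma GP.sum_shift (g : ℕ → ℂ) (f : ℕ) (hg : ∀ a b : ℕ, a % f = b % f → g a = g b)
    (v : ℕ) : ∑ u ∈ Finset.range f, g (u + v) = ∑ u ∈ Finset.range f, g u := by
  induction v with
  | zero => simp
  | succ v ih =>
    have h1 : ∀ (h : ℕ → ℂ), (∀ a b : ℕ, a % f = b % f → h a = h b) →
        ∑ u ∈ Finset.range f, h (u + 1) = ∑ u ∈ Finset.range f, h u := by
      intro h hh
      have e1 := Finset.sum_range_succ' h f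
      have e2 := Finset.sum_range_succ h f
      have hf0 : h f = h 0 := hh f 0 (by simp)
      have e3 := e1.symm.trans e2
      rw [hf0] at e3
      exact add_right_cancel e3
    calc ∑ u ∈ Finset.range f, g (u + (v + 1))
        = ∑ u ∈ Finset.range f, (fun a => g (a + v)) (u + 1) := by
          refine Finset.sum_congr rfl fun u _ => ?_
          simp only
          congr 1
          omega
      _ = ∑ u ∈ Finset.range f, g (u + v) :=
          h1 _ (fun a b hab => hg _ _ (by rw [Nat.add_mod a v f, hab, ← Nat.add_mod]))
      _ = ∑ u ∈ Finset.range f, g u := ih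

/-- `η_l·η_{l+k} = Σ_{h=0}^{d-1} (k,h)·η_{l+h} + f·δ_{θk}`. -/
theorem gaussPeriod_mul_gaussPeriod (p d f : ℕ) (hp : p.Prime) (hodd : Odd p)
    (hd : 2 ≤ d) (hdvd : d ∣ p - 1) (hf : f = (p - 1) / d)
    (ω : (ZMod p)ˣ) (hω : ∀ x : (ZMod p)ˣ, ∃ n : ℕ, ω ^ n = x)
    (ζ : ℂ) (hζ : IsPrimitiveRoot ζ p)
    (k l : ℕ) (hk : k < d) (hl : l < d) :
    gaussPeriod p d f ω ζ l * gaussPeriod p d f ω ζ (l + k)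
      = ∑ h ∈ Finset.range d, (cycNum p d f ω k h : ℂ) * gaussPeriod p d f ω ζ (l + h)
        + (f : ℂ) * (if theta d f = k then 1 else 0) := by
  haveI : Fact p.Prime := ⟨hp⟩
  set ωc : ZMod p := (ω : ZMod p) with hωc
  have hp3 : 3 ≤ p := by
    rcases hodd with ⟨j, hj⟩
    have := hp.two_le
    omega
  have hdf : d * f = p - 1 := by rw [hf]; exact Nat.mul_div_cancel' hdvd
  have hd0 : 0 < d := by omega
  have hf0 : 0 < f := by
    rcases Nat.eq_zero_or_pos f with h | h
    · exfalso; rw [h, Nat.mul_zero] at hdf; omega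
    · exact h
  have hord : orderOf ω = p - 1 := by
    have : orderOf ω = Nat.card (ZMod p)ˣ := by
      apply orderOf_eq_card_of_forall_mem_zpowers
      intro x
      obtain ⟨n, hn⟩ := hω x
      exact ⟨(n : ℤ), by simpa using hn⟩
    rw [this, Nat.card_eq_fintype_card, ZMod.card_units]
  have hω1 : ωc ^ (p - 1) = 1 := by
    have : ω ^ (p - 1) = 1 := by rw [← hord]; exact pow_orderOf_eq_one ω
    calc ωc ^ (p - 1) = ((ω ^ (p - 1) : (ZMod p)ˣ) : ZMod p) := by push_cast; ring
      _ = 1 := by rw [this]; rfl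
  have hinj : ∀ a b : ℕ, a < p - 1 → b < p - 1 → ωc ^ a = ωc ^ b → a = b := by
    intro a b ha hb hab
    have hu : ω ^ a = ω ^ b := by
      apply Units.ext
      push_cast
      exact hab
    have := pow_eq_pow_iff_modEq.mp hu
    rw [hord] at this
    have := this.eq_of_lt_of_lt ha hb
    exact this
  have hne0 : ∀ n : ℕ, ωc ^ n ≠ 0 := by
    intro n
    have : ωc ^ n = ((ω ^ n : (ZMod p)ˣ) : ZMod p) := by push_cast; ring
    rw [this]
    exact (ω ^ n).ne_zero
  have hzp : ζ ^ p = 1 := hζ.pow_eq_one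
  have hbound : ∀ a b : ℕ, a < f → b < d → d * a + b < p - 1 := by
    intro a b ha hb
    have h1 : d * (a + 1) = d * a + d := by ring
    have h2 : d * (a + 1) ≤ d * f := Nat.mul_le_mul_left d ha
    omega
  have e_add : ∀ a b : ZMod p, ζ ^ ((a + b).val) = ζ ^ a.val * ζ ^ b.val := by
    intro a b
    rw [ZMod.val_add, GP.pow_mod_eq hzp, pow_add]
  -- periodicity of the base-point exponent
  have hper : ∀ c a : ℕ, ωc ^ (d * a + c) = ωc ^ (d * (a % f) + c) := by
    intro c a
    have ha : a = f * (a / f) + a % f := (Nat.div_add_mod a f).symm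
    have h1 : d * a + c = (d * f) * (a / f) + (d * (a % f) + c) := by
      conv_lhs => rw [ha]
      ring
    rw [h1, pow_add, pow_mul, hdf, hω1, one_pow, one_mul]
  have hshift : ∀ (v c : ℕ),
      ∑ u ∈ Finset.range f, ζ ^ ((ωc ^ (d * (u + v) + c)).val) = gaussPeriod p d f ω ζ c := by
    intro v c
    rw [gaussPeriod]
    exact GP.sum_shift (fun a => ζ ^ ((ωc ^ (d * a + c)).val)) f
      (fun a b hab => by
        show ζ ^ ((ωc ^ (d * a + c)).val) = ζ ^ ((ωc ^ (d * b + c)).val)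
        rw [hper c a, hper c b, hab]) v
  -- the key pointwise identity
  have key : ∀ w : ℕ,
      ∑ u ∈ Finset.range f, ζ ^ ((ωc ^ (d * u + l) + ωc ^ (d * (u + w) + (l + k))).val)
      = (∑ h ∈ Finset.range d, ∑ v ∈ Finset.range f,
          if (1 : ZMod p) + ωc ^ (d * w + k) = ωc ^ (d * v + h)
            then gaussPeriod p d f ω ζ (l + h) else 0)
        + (if (1 : ZMod p) + ωc ^ (d * w + k) = 0 then (f : ℂ) else 0) := by
    intro w
    have hfac : ∀ u : ℕ, ωc ^ (d * u + l) + ωc ^ (d * (u + w) + (l + k))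
        = ωc ^ (d * u + l) * ((1 : ZMod p) + ωc ^ (d * w + k)) := by
      intro u
      have : d * (u + w) + (l + k) = (d * u + l) + (d * w + k) := by ring
      rw [this, pow_add ωc (d * u + l) (d * w + k), mul_add, mul_one]
    by_cases hx : (1 : ZMod p) + ωc ^ (d * w + k) = 0
    · rw [if_pos hx]
      have hL : ∀ u : ℕ, ζ ^ ((ωc ^ (d * u + l) + ωc ^ (d * (u + w) + (l + k))).val) = 1 := by
        intro u
        rw [hfac u, hx, mul_zero]
        simp
      rw [Finset.sum_congr rfl (fun u _ => hL u), Finset.sum_const, Finset.card_range,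
        nsmul_eq_mul, mul_one]
      have hz : ∀ h ∈ Finset.range d, (∑ v ∈ Finset.range f,
          if (1 : ZMod p) + ωc ^ (d * w + k) = ωc ^ (d * v + h)
            then gaussPeriod p d f ω ζ (l + h) else 0) = 0 := by
        intro h _
        apply Finset.sum_eq_zero
        intro v _
        rw [if_neg]
        rw [hx]
        exact fun hc => hne0 _ hc.symm
      rw [Finset.sum_congr rfl hz, Finset.sum_const, smul_zero, zero_add]
    · rw [if_neg hx, add_zero]
      obtain ⟨n, hn⟩ := hω (Units.mk0 _ hx)
      have hxn : ωc ^ n = (1 : ZMod p) + ωc ^ (d * w + k) := by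
        have : ((ω ^ n : (ZMod p)ˣ) : ZMod p) = ((Units.mk0 _ hx : (ZMod p)ˣ) : ZMod p) := by
          rw [hn]
        simpa using this
      set n' := n % (p - 1) with hn'
      have hn'lt : n' < p - 1 := Nat.mod_lt _ (by omega)
      have hxn' : ωc ^ n' = (1 : ZMod p) + ωc ^ (d * w + k) := by
        rw [hn', GP.pow_mod_eq hω1, hxn]
      set h₀ := n' % d with hh₀
      set v₀ := n' / d with hv₀
      have hh₀d : h₀ < d := Nat.mod_lt _ hd0
      have hv₀f : v₀ < f := by
        rw [hv₀]
        apply Nat.div_lt_of_lt_mul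
        rw [hdf]
        exact hn'lt
      have hdec : d * v₀ + h₀ = n' := by rw [hh₀, hv₀, Nat.div_add_mod]
      have huniq : ∀ v h : ℕ, v < f → h < d →
          ((1 : ZMod p) + ωc ^ (d * w + k) = ωc ^ (d * v + h) ↔ (v = v₀ ∧ h = h₀)) := by
        intro v h hv hh
        constructor
        · intro he
          have heq : d * v + h = d * v₀ + h₀ := by
            apply hinj
            · exact hbound v h hv hh
            · rw [hdec]; exact hn'lt
            · rw [← he, hdec, hxn']
          have e1 : (d * v + h) % d = (d * v₀ + h₀) % d := by rw [heq]
          rw [Nat.mul_add_mod, Nat.mul_add_mod, Nat.mod_eq_of_lt hh, Nat.mod_eq_of_lt hh₀d] at e1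
          have e2 : (d * v + h) / d = (d * v₀ + h₀) / d := by rw [heq]
          rw [Nat.mul_add_div hd0, Nat.mul_add_div hd0, Nat.div_eq_of_lt hh,
            Nat.div_eq_of_lt hh₀d] at e2
          exact ⟨by omega, e1⟩
        · rintro ⟨rfl, rfl⟩
          rw [hdec, hxn']
      -- RHS equals gaussPeriod (l + h₀)
      have hRHS : (∑ h ∈ Finset.range d, ∑ v ∈ Finset.range f,
          if (1 : ZMod p) + ωc ^ (d * w + k) = ωc ^ (d * v + h)
            then gaussPeriod p d f ω ζ (l + h) else 0) = gaussPeriod p d f ω ζ (l + h₀) := by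
        rw [Finset.sum_eq_single h₀]
        · rw [Finset.sum_eq_single v₀]
          · rw [if_pos]
            rw [huniq v₀ h₀ hv₀f hh₀d]
            exact ⟨rfl, rfl⟩
          · intro v hv hvne
            rw [if_neg]
            rw [huniq v h₀ (Finset.mem_range.mp hv) hh₀d]
            tauto
          · intro hmem
            exact absurd (Finset.mem_range.mpr hv₀f) hmem
        · intro h hh hhne
          apply Finset.sum_eq_zero
          intro v hv
          rw [if_neg]
          rw [huniq v h (Finset.mem_range.mp hv) (Finset.mem_range.mp hh)]
          tauto
        · intro hmem
          exact absurd (Finset.mem_range.mpr hh₀d) hmem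
      rw [hRHS]
      have hL : ∀ u : ℕ, ζ ^ ((ωc ^ (d * u + l) + ωc ^ (d * (u + w) + (l + k))).val)
          = ζ ^ ((ωc ^ (d * (u + v₀) + (l + h₀))).val) := by
        intro u
        congr 2
        rw [hfac u, ← hxn', ← hdec, ← pow_add]
        congr 1
        ring
      rw [Finset.sum_congr rfl (fun u _ => hL u), hshift v₀ (l + h₀)]
  -- cycNum as a finset card
  have hcyc : ∀ h : ℕ, cycNum p d f ω k h =
      ((Finset.range f ×ˢ Finset.range f).filter
        (fun wv : ℕ × ℕ => (1 : ZMod p) + ωc ^ (d * wv.1 + k) = ωc ^ (d * wv.2 + h))).card := by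
    intro h
    rw [cycNum, ← Nat.card_eq_finsetCard]
    apply Nat.card_congr
    apply Equiv.subtypeEquivRight
    intro uv
    simp only [Finset.mem_coe, Finset.mem_filter, Finset.mem_product, Finset.mem_range]
    tauto
  -- count of w with 1 + ω^{dw+k} = 0
  have hm1 : ωc ^ ((p - 1) / 2) = -1 := by
    have h2 : 2 ∣ p - 1 := by
      rcases hodd with ⟨j, hj⟩
      exact ⟨j, by omega⟩
    have hmm : ωc ^ ((p - 1) / 2) * ωc ^ ((p - 1) / 2) = 1 := by
      rw [← pow_add]
      have : (p - 1) / 2 + (p - 1) / 2 = p - 1 := by omega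
      rw [this, hω1]
    rcases mul_self_eq_one_iff.mp hmm with h1 | h1
    · exfalso
      have : (p - 1) / 2 = 0 := by
        apply hinj _ 0 (by omega) (by omega)
        rw [h1, pow_zero]
      omega
    · exact h1
  have hZ : ((Finset.range f).filter
        (fun w => (1 : ZMod p) + ωc ^ (d * w + k) = 0)).card
      = if theta d f = k then 1 else 0 := by
    set m := (p - 1) / 2 with hm
    have h2 : 2 ∣ p - 1 := by
      rcases hodd with ⟨j, hj⟩
      exact ⟨j, by omega⟩
    have hmlt : m < p - 1 := by omega
    have hcond : ∀ w : ℕ, w < f →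
        (((1 : ZMod p) + ωc ^ (d * w + k) = 0) ↔ d * w + k = m) := by
      intro w hw
      constructor
      · intro hcw
        apply hinj _ _ (hbound w k hw hk) hmlt
        rw [hm1]
        linear_combination hcw
      · intro hcw
        rw [hcw, hm1]
        ring
    have hth : theta d f = m % d := by
      by_cases hfe : Even f
      · obtain ⟨t, ht⟩ := hfe
        have hA : d * f = d * t + d * t := by rw [ht, Nat.mul_add]
        have hmdt : m = d * t := by omega
        rw [theta, if_pos ⟨t, ht⟩, hmdt, Nat.mul_mod_right]
      · have hfodd : Odd f := Nat.odd_iff.mpr (Nat.not_even_iff.mp hfe)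
        obtain ⟨t, ht⟩ := hfodd
        have h2d : 2 ∣ d := by
          rcases (Nat.Prime.dvd_mul Nat.prime_two).mp (hdf ▸ h2) with h | h
          · exact h
          · exfalso; omega
        obtain ⟨e, he⟩ := h2d
        have hmde : m = d * t + e := by
          have hA : d * f = (d * t + e) + (d * t + e) := by rw [ht, he]; ring
          omega
        rw [theta, if_neg hfe, hmde, Nat.mul_add_mod, Nat.mod_eq_of_lt (by omega)]
        omega
    rw [hth]
    by_cases hkm : m % d = k
    · have hfeq : ((Finset.range f).filter
          (fun w => (1 : ZMod p) + ωc ^ (d * w + k) = 0)) = {m / d} := by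
        ext w
        simp only [Finset.mem_filter, Finset.mem_range, Finset.mem_singleton]
        constructor
        · rintro ⟨hw, hcw⟩
          have := (hcond w hw).mp hcw
          have h2 : (d * w + k) / d = m / d := by rw [this]
          rw [Nat.mul_add_div hd0, Nat.div_eq_of_lt hk] at h2
          omega
        · rintro rfl
          have hwf : m / d < f := Nat.div_lt_of_lt_mul (by omega)
          refine ⟨hwf, (hcond _ hwf).mpr ?_⟩
          conv_rhs => rw [← Nat.div_add_mod m d]
          rw [hkm]
      rw [hfeq, if_pos hkm, Finset.card_singleton]
    · rw [if_neg hkm]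
      rw [Finset.card_eq_zero]
      apply Finset.filter_eq_empty_iff.mpr
      intro w hw
      intro hcw
      have := (hcond w (Finset.mem_range.mp hw)).mp hcw
      apply hkm
      rw [← this, Nat.mul_add_mod, Nat.mod_eq_of_lt hk]
  -- main computation
  calc gaussPeriod p d f ω ζ l * gaussPeriod p d f ω ζ (l + k)
      = ∑ u ∈ Finset.range f, ζ ^ ((ωc ^ (d * u + l)).val)
          * ∑ w ∈ Finset.range f, ζ ^ ((ωc ^ (d * (w + u) + (l + k))).val) := by
        rw [gaussPeriod, Finset.sum_mul]
        refine Finset.sum_congr rfl fun u _ => ?_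
        rw [← hshift u (l + k)]
    _ = ∑ u ∈ Finset.range f, ∑ w ∈ Finset.range f,
          ζ ^ ((ωc ^ (d * u + l) + ωc ^ (d * (u + w) + (l + k))).val) := by
        apply Finset.sum_congr rfl
        intro u _
        rw [Finset.mul_sum]
        apply Finset.sum_congr rfl
        intro w _
        rw [e_add, Nat.add_comm w u]
    _ = ∑ w ∈ Finset.range f, ∑ u ∈ Finset.range f,
          ζ ^ ((ωc ^ (d * u + l) + ωc ^ (d * (u + w) + (l + k))).val) := Finset.sum_comm
    _ = ∑ w ∈ Finset.range f, ((∑ h ∈ Finset.range d, ∑ v ∈ Finset.range f,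
          if (1 : ZMod p) + ωc ^ (d * w + k) = ωc ^ (d * v + h)
            then gaussPeriod p d f ω ζ (l + h) else 0)
        + (if (1 : ZMod p) + ωc ^ (d * w + k) = 0 then (f : ℂ) else 0)) :=
        Finset.sum_congr rfl fun w _ => key w
    _ = ∑ h ∈ Finset.range d, (cycNum p d f ω k h : ℂ) * gaussPeriod p d f ω ζ (l + h)
        + (f : ℂ) * (if theta d f = k then 1 else 0) := by
        rw [Finset.sum_add_distrib]
        congr 1
        · rw [Finset.sum_comm]
          refine Finset.sum_congr rfl fun h _ => ?_
          calc ∑ w ∈ Finset.range f, ∑ v ∈ Finset.range f,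
                (if (1 : ZMod p) + ωc ^ (d * w + k) = ωc ^ (d * v + h)
                  then gaussPeriod p d f ω ζ (l + h) else 0)
              = (∑ w ∈ Finset.range f, ∑ v ∈ Finset.range f,
                  (if (1 : ZMod p) + ωc ^ (d * w + k) = ωc ^ (d * v + h)
                    then (1 : ℂ) else 0)) * gaussPeriod p d f ω ζ (l + h) := by
                rw [Finset.sum_mul]
                refine Finset.sum_congr rfl fun w _ => ?_
                rw [Finset.sum_mul]
                exact Finset.sum_congr rfl fun v _ => (boole_mul _ _).symm
            _ = (cycNum p d f ω k h : ℂ) * gaussPeriod p d f ω ζ (l + h) := by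
                congr 1
                rw [← Finset.sum_product', Finset.sum_boole, hcyc h]
        · calc ∑ w ∈ Finset.range f,
                (if (1 : ZMod p) + ωc ^ (d * w + k) = 0 then (f : ℂ) else 0)
              = (f : ℂ) * ∑ w ∈ Finset.range f,
                  (if (1 : ZMod p) + ωc ^ (d * w + k) = 0 then (1 : ℂ) else 0) := by
                rw [Finset.mul_sum]
                exact Finset.sum_congr rfl fun w _ => (mul_boole _ _).symm
            _ = (f : ℂ) * (if theta d f = k then 1 else 0) := by
                rw [Finset.sum_boole, hZ]
                push_cast
                ring
end

section
/- Let p be an odd prime, d ≥ 2 with d ∣ p−1, f = (p−1)/d. For every 0 ≤ ν ≤ d−1: n(0,ν) = Σ_{i=0}^{d−1} η_{i+ν} = −1, and n(1,ν) = Σ_{i=0}^{d−1} η_i · η_{i+ν} = p·δ_{θν} − f. -/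
set_option maxHeartbeats 1000000
open Finset

private lemma zpm (p : ℕ) {ζ : ℂ} (hζ : IsPrimitiveRoot ζ p) (a : ℕ) :
    ζ ^ (a % p) = ζ ^ a := by
  conv_rhs => rw [← Nat.div_add_mod a p, pow_add, pow_mul, hζ.pow_eq_one, one_pow, one_mul]

private lemma e_add (p : ℕ) [NeZero p] {ζ : ℂ} (hζ : IsPrimitiveRoot ζ p) (x y : ZMod p) :
    ζ ^ (x + y).val = ζ ^ x.val * ζ ^ y.val := by
  rw [ZMod.val_add, zpm p hζ, pow_add]

private lemma sum_all (p : ℕ) [NeZero p] (hp : 1 < p) {ζ : ℂ} (hζ : IsPrimitiveRoot ζ p) :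
    ∑ x : ZMod p, ζ ^ x.val = 0 := by
  rw [← hζ.geom_sum_eq_zero hp]
  refine Finset.sum_nbij' (fun x => x.val) (fun a => (a : ZMod p)) ?_ ?_ ?_ ?_ ?_
  · intro a _; exact mem_range.mpr (ZMod.val_lt a)
  · intro a _; exact mem_univ _
  · intro a _; simp [ZMod.natCast_val]
  · intro a ha; exact ZMod.val_cast_of_lt (mem_range.mp ha)
  · intro a _; rfl

private lemma sum_units (p : ℕ) [NeZero p] (hp : p.Prime) (g : ZMod p → ℂ) :
    ∑ x : (ZMod p)ˣ, g (x : ZMod p) = ∑ x ∈ (univ : Finset (ZMod p)).erase 0, g x := by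
  haveI : Fact p.Prime := ⟨hp⟩
  refine Finset.sum_bij (fun u _ => (u : ZMod p)) ?_ ?_ ?_ ?_
  · intro u _; exact mem_erase.mpr ⟨u.ne_zero, mem_univ _⟩
  · intro a _ b _ h; exact Units.ext h
  · intro x hx
    have hu : IsUnit x := isUnit_iff_ne_zero.mpr (mem_erase.mp hx).1
    exact ⟨hu.unit, mem_univ _, hu.unit_spec.symm⟩
  · intro u _; rfl

private lemma sumA (p : ℕ) [NeZero p] (hp : p.Prime) {ζ : ℂ} (hζ : IsPrimitiveRoot ζ p)
    (c : ZMod p) :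
    ∑ x : (ZMod p)ˣ, ζ ^ ((x : ZMod p) * c).val = if c = 0 then ((p : ℂ) - 1) else -1 := by
  haveI : Fact p.Prime := ⟨hp⟩
  split_ifs with hc
  · subst hc
    simp only [mul_zero]
    rw [ZMod.val_zero, pow_zero, Finset.sum_const, Finset.card_univ, ZMod.card_units p, nsmul_eq_mul, mul_one]
    have : (1:ℕ) ≤ p := hp.one_lt.le
    push_cast [Nat.cast_sub this]
    ring
  · lift c to (ZMod p)ˣ using isUnit_iff_ne_zero.mpr hc
    have heq := Fintype.sum_equiv (Equiv.mulRight c)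
        (fun x : (ZMod p)ˣ => ζ ^ ((x : ZMod p) * (c : ZMod p)).val)
        (fun y : (ZMod p)ˣ => ζ ^ ((y : ZMod p)).val) (by intro x; simp)
    rw [show (∑ x : (ZMod p)ˣ, ζ ^ ((x : ZMod p) * (c : ZMod p)).val)
        = ∑ y : (ZMod p)ˣ, ζ ^ ((y : ZMod p)).val from heq,
      sum_units p hp (fun x => ζ ^ x.val)]
    have h0 : ∑ x : ZMod p, ζ ^ x.val = 0 := sum_all p hp.one_lt hζ
    have hsplit : ∑ x : ZMod p, ζ ^ x.val
        = ζ ^ (0 : ZMod p).val + ∑ x ∈ (univ : Finset (ZMod p)).erase 0, ζ ^ x.val :=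
      (Finset.add_sum_erase _ _ (mem_univ 0)).symm
    rw [h0, ZMod.val_zero, pow_zero] at hsplit
    linear_combination -hsplit

private lemma sum_pow_gen {G : Type*} [Group G] [Fintype G] (ω : G)
    (hord : orderOf ω = Fintype.card G) (hω : ∀ x : G, ∃ n : ℕ, ω ^ n = x)
    (g : G → ℂ) :
    ∑ j ∈ range (Fintype.card G), g (ω ^ j) = ∑ x : G, g x := by
  refine Finset.sum_bij (fun j _ => ω ^ j) (fun _ _ => mem_univ _) ?_ ?_ (fun _ _ => rfl)
  · intro a ha b hb h
    exact pow_injOn_Iio_orderOf (by simpa [hord] using mem_range.mp ha)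
      (by simpa [hord] using mem_range.mp hb) h
  · intro x _
    obtain ⟨n, hn⟩ := hω x
    have key : ω ^ (n % Fintype.card G) = x := by rw [← hord, pow_mod_orderOf, hn]
    exact ⟨n % Fintype.card G, mem_range.mpr (Nat.mod_lt _ Fintype.card_pos), key⟩

private lemma sum_prod_range (d f : ℕ) (hd : 0 < d) (g : ℕ → ℂ) :
    ∑ i ∈ range d, ∑ u ∈ range f, g (d * u + i) = ∑ j ∈ range (d * f), g j := by
  rw [← Finset.sum_product']
  refine Finset.sum_nbij' (fun x => d * x.2 + x.1) (fun j => (j % d, j / d)) ?_ ?_ ?_ ?_ ?_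
  · rintro ⟨i, u⟩ h
    simp only [mem_product, mem_range] at h
    simp only [mem_range]
    calc d * u + i < d * u + d := by omega
    _ = d * (u + 1) := by ring
    _ ≤ d * f := Nat.mul_le_mul_left d (by omega)
  · intro j hj
    simp only [mem_range] at hj
    simp only [mem_product, mem_range]
    exact ⟨Nat.mod_lt _ hd, Nat.div_lt_of_lt_mul (by omega)⟩
  · rintro ⟨i, u⟩ h
    simp only [mem_product, mem_range] at h
    have h1 : (d * u + i) % d = i := by rw [Nat.mul_add_mod, Nat.mod_eq_of_lt h.1]
    have h2 : (d * u + i) / d = u := by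
      rw [Nat.mul_add_div hd, Nat.div_eq_of_lt h.1]; omega
    simp [h1, h2]
  · intro j _
    exact Nat.div_add_mod j d
  · intro a _; rfl

private lemma sum_range_shift (f u : ℕ) (F : ℕ → ℂ) (hF : ∀ a, F (a + f) = F a) :
    ∑ v ∈ range f, F v = ∑ t ∈ range f, F (t + u) := by
  induction u with
  | zero => simp
  | succ u ih =>
    rw [ih]
    have key : ∀ G : ℕ → ℂ, (∀ a, G (a + f) = G a) →
        ∑ t ∈ range f, G (t + 1) = ∑ t ∈ range f, G t := by
      intro G hG
      have h1 : ∑ t ∈ range (f + 1), G t = ∑ t ∈ range f, G (t + 1) + G 0 :=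
        Finset.sum_range_succ' G f
      have h2 : ∑ t ∈ range (f + 1), G t = ∑ t ∈ range f, G t + G f :=
        Finset.sum_range_succ G f
      have h3 : G f = G 0 := by simpa using hG 0
      rw [h3] at h2
      linear_combination h1.symm.trans h2
    have := key (fun t => F (t + u)) (fun a => by show F (a + f + u) = F (a + u); rw [show a + f + u = a + u + f by ring, hF])
    calc ∑ t ∈ range f, F (t + u) = ∑ t ∈ range f, F (t + 1 + u) := this.symm
    _ = ∑ t ∈ range f, F (t + (u + 1)) :=
      Finset.sum_congr rfl (fun t _ => congrArg F (by ring))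

private lemma theta_decomp (p d f : ℕ) (hp3 : 3 ≤ p) (hd : 2 ≤ d) (hf1 : 1 ≤ f)
    (hdf : d * f = p - 1) (hodd : Odd p) :
    ∃ q r, (p-1)/2 = d * q + r ∧ r < d ∧ q < f ∧ theta d f = r := by
  rcases Nat.even_or_odd f with ⟨m, hm⟩ | ⟨m, hm⟩
  · refine ⟨m, 0, ?_, by omega, by omega, by have hev : Even f := ⟨m, hm⟩; simp [theta, hev]⟩
    have : p - 1 = 2 * (d * m) := by rw [← hdf, hm]; ring
    omega
  · have hpe : 2 ∣ p - 1 := by obtain ⟨k, hk⟩ := hodd; omega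
    have hdeven : 2 ∣ d := by
      rcases (Nat.Prime.dvd_mul Nat.prime_two).mp (hdf ▸ hpe) with h | h
      · exact h
      · exfalso; omega
    obtain ⟨a, ha⟩ := hdeven
    refine ⟨m, a, ?_, by omega, by omega, ?_⟩
    · have : p - 1 = 2 * (d * m + a) := by rw [← hdf, hm, ha]; ring
      omega
    · have hof : ¬ Even f := by rw [Nat.even_iff]; omega
      simp [theta, hof]; omega

/-- `n(0,ν) = −1` and `n(1,ν) = p·δ_{θν} − f`. -/
theorem nInt_zero_and_one (p d f : ℕ) (hp : p.Prime) (hodd : Odd p)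
    (hd : 2 ≤ d) (hdvd : d ∣ p - 1) (hf : f = (p - 1) / d)
    (ω : (ZMod p)ˣ) (hω : ∀ x : (ZMod p)ˣ, ∃ n : ℕ, ω ^ n = x)
    (ζ : ℂ) (hζ : IsPrimitiveRoot ζ p)
    (ν : ℕ) (hν : ν < d) :
    nInt p d f ω ζ 0 ν = -1 ∧
    nInt p d f ω ζ 1 ν = (p : ℂ) * (if theta d f = ν then 1 else 0) - (f : ℂ) := by
  haveI : Fact p.Prime := ⟨hp⟩
  haveI : NeZero p := ⟨hp.ne_zero⟩
  have hp3 : 3 ≤ p := by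
    have h2 := hp.two_le
    have : p ≠ 2 := by rintro rfl; exact (by norm_num : ¬ Odd 2) hodd
    omega
  have hdf : d * f = p - 1 := by rw [hf]; exact Nat.mul_div_cancel' hdvd
  have hf1 : 1 ≤ f := by
    rcases Nat.eq_zero_or_pos f with h | h
    · subst h; simp at hdf; omega
    · exact h
  have hord : orderOf ω = p - 1 := by
    rw [orderOf_eq_card_of_forall_mem_zpowers (fun x => ?_), Nat.card_eq_fintype_card,
      ZMod.card_units p]
    obtain ⟨n, hn⟩ := hω x
    exact ⟨(n : ℤ), by rw [← hn]; norm_cast⟩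
  have hcard : Fintype.card (ZMod p)ˣ = p - 1 := ZMod.card_units p
  have hωpow : ∀ a b : ℕ, a % (p-1) = b % (p-1) → (ω : ZMod p) ^ a = (ω : ZMod p) ^ b := by
    intro a b hab
    have h : ω ^ a = ω ^ b := pow_eq_pow_iff_modEq.mpr (by rw [hord]; exact hab)
    calc (ω:ZMod p)^a = ((ω^a : (ZMod p)ˣ) : ZMod p) := (Units.val_pow_eq_pow_val _ _).symm
    _ = ((ω^b : (ZMod p)ˣ) : ZMod p) := by rw [h]
    _ = (ω:ZMod p)^b := Units.val_pow_eq_pow_val _ _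
  have key1 : ∀ c : ZMod p, ∑ j ∈ range (d*f), ζ ^ (((ω:ZMod p))^j * c).val
      = if c = 0 then ((p:ℂ)-1) else -1 := by
    intro c
    have h : ∑ j ∈ range (d*f), ζ ^ (((ω:ZMod p))^j * c).val
        = ∑ j ∈ range (Fintype.card (ZMod p)ˣ),
            (fun x : (ZMod p)ˣ => ζ ^ (((x:ZMod p)) * c).val) (ω ^ j) := by
      rw [show d*f = Fintype.card (ZMod p)ˣ from hdf.trans hcard.symm]
      exact sum_congr rfl fun j _ => by simp [Units.val_pow_eq_pow_val]
    exact h.trans ((sum_pow_gen ω (hord.trans hcard.symm) hω _).trans (sumA p hp hζ c))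
  constructor
  · -- Part 1
    simp only [nInt, pow_zero, one_mul, gaussPeriod]
    have e1 : ∑ i ∈ range d, ∑ u ∈ range f, ζ ^ (((ω:ZMod p)) ^ (d*u + (i+ν))).val
        = ∑ j ∈ range (d*f), ζ ^ (((ω:ZMod p))^j * ((ω:ZMod p))^ν).val := by
      rw [← sum_prod_range d f (by omega) (fun j => ζ ^ (((ω:ZMod p))^j * ((ω:ZMod p))^ν).val)]
      refine sum_congr rfl fun i _ => sum_congr rfl fun u _ => ?_
      rw [← pow_add]
      congr 2
      ring
    rw [e1, key1, if_neg (pow_ne_zero _ (Units.ne_zero ω))]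
  · -- Part 2
    simp only [nInt, pow_one, gaussPeriod]
    -- ω^((p-1)/2) = -1
    have h2e : 2 * ((p-1)/2) = p - 1 := by obtain ⟨k, hk⟩ := hodd; omega
    have hz2 : (ω^((p-1)/2))^2 = 1 := by
      rw [← pow_mul, show (p-1)/2 * 2 = p - 1 by omega, ← hord, pow_orderOf_eq_one]
    have hz1 : ω^((p-1)/2) ≠ 1 := by
      intro h
      have hdvd2 := orderOf_dvd_of_pow_eq_one h
      rw [hord] at hdvd2
      have := Nat.le_of_dvd (by omega) hdvd2
      omega
    have hhalf : (ω : ZMod p)^((p-1)/2) = -1 := by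
      have hsq : ((ω:ZMod p)^((p-1)/2)) * ((ω:ZMod p)^((p-1)/2)) = 1 := by
        have h := congrArg (Units.val) hz2
        rw [Units.val_pow_eq_pow_val, Units.val_pow_eq_pow_val] at h
        rw [← pow_two]
        simpa using h
      rcases mul_self_eq_one_iff.mp hsq with h | h
      · exact absurd (Units.ext (by rw [Units.val_pow_eq_pow_val]; simpa using h)) hz1
      · exact h
    have hcond : ∀ t, t < f → ((1 + (ω:ZMod p)^(d*t+ν) = 0) ↔ d*t+ν = (p-1)/2) := by
      intro t ht
      have hlt : d*t+ν < p - 1 := by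
        have h1 : d*(t+1) ≤ d*f := Nat.mul_le_mul_left d (by omega)
        have h2 : d*(t+1) = d*t+d := by ring
        omega
      have hlt2 : (p-1)/2 < p-1 := by omega
      constructor
      · intro h
        have hx : (ω:ZMod p)^(d*t+ν) = (ω:ZMod p)^((p-1)/2) := by
          rw [hhalf]; linear_combination h
        have hu : ω^(d*t+ν) = ω^((p-1)/2) := Units.ext (by
          rw [Units.val_pow_eq_pow_val, Units.val_pow_eq_pow_val]; exact hx)
        have hm := pow_eq_pow_iff_modEq.mp hu
        rw [hord] at hm
        have hm' : (d*t+ν) % (p-1) = ((p-1)/2) % (p-1) := hm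
        rw [Nat.mod_eq_of_lt hlt, Nat.mod_eq_of_lt hlt2] at hm'
        exact hm'
      · intro h; rw [h, hhalf]; ring
    -- expand products
    have expand : ∀ i, (∑ u ∈ range f, ζ ^ (((ω:ZMod p)) ^ (d*u+i)).val)
          * (∑ v ∈ range f, ζ ^ (((ω:ZMod p)) ^ (d*v+(i+ν))).val)
        = ∑ u ∈ range f, ∑ t ∈ range f,
            ζ ^ ((((ω:ZMod p)) ^ (d*u+i)) * (1 + ((ω:ZMod p))^(d*t+ν))).val := by
      intro i
      rw [Finset.sum_mul_sum]
      refine sum_congr rfl fun u _ => ?_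
      rw [sum_congr rfl (fun v _ => ((e_add p hζ (((ω:ZMod p)) ^ (d*u+i))
        (((ω:ZMod p)) ^ (d*v+(i+ν)))).symm :
          ζ ^ (((ω:ZMod p)) ^ (d*u+i)).val * ζ ^ (((ω:ZMod p)) ^ (d*v+(i+ν))).val
          = ζ ^ ((((ω:ZMod p)) ^ (d*u+i)) + ((ω:ZMod p)) ^ (d*v+(i+ν))).val))]
      rw [sum_range_shift f u
        (fun v => ζ ^ ((((ω:ZMod p)) ^ (d*u+i)) + ((ω:ZMod p)) ^ (d*v+(i+ν))).val)
        (by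
          intro a
          have hper : (ω:ZMod p)^(d*(a+f)+(i+ν)) = (ω:ZMod p)^(d*a+(i+ν)) := by
            apply hωpow
            rw [show d*(a+f)+(i+ν) = (d*a+(i+ν)) + (p-1) by rw [← hdf]; ring,
              Nat.add_mod_right]
          simp only [hper])]
      refine sum_congr rfl fun t _ => ?_
      have hsplit : (ω:ZMod p)^(d*(t+u)+(i+ν))
          = (ω:ZMod p)^(d*u+i) * (ω:ZMod p)^(d*t+ν) := by
        rw [← pow_add]; congr 1; ring
      rw [hsplit, mul_add, mul_one]
    rw [sum_congr rfl fun i _ => expand i]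
    rw [sum_congr rfl fun i (_ : i ∈ range d) => (Finset.sum_comm :
      ∑ u ∈ range f, ∑ t ∈ range f,
        ζ ^ ((((ω:ZMod p)) ^ (d*u+i)) * (1 + ((ω:ZMod p))^(d*t+ν))).val
      = ∑ t ∈ range f, ∑ u ∈ range f,
        ζ ^ ((((ω:ZMod p)) ^ (d*u+i)) * (1 + ((ω:ZMod p))^(d*t+ν))).val)]
    rw [Finset.sum_comm]
    have inner : ∀ t, ∑ i ∈ range d, ∑ u ∈ range f,
        ζ ^ ((((ω:ZMod p)) ^ (d*u+i)) * (1 + ((ω:ZMod p))^(d*t+ν))).val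
        = if (1 + ((ω:ZMod p))^(d*t+ν)) = 0 then ((p:ℂ)-1) else -1 := by
      intro t
      rw [show (∑ i ∈ range d, ∑ u ∈ range f,
          ζ ^ ((((ω:ZMod p)) ^ (d*u+i)) * (1 + ((ω:ZMod p))^(d*t+ν))).val)
        = ∑ j ∈ range (d*f), ζ ^ (((ω:ZMod p))^j * (1 + ((ω:ZMod p))^(d*t+ν))).val from
        sum_prod_range d f (by omega)
          (fun j => ζ ^ (((ω:ZMod p))^j * (1 + ((ω:ZMod p))^(d*t+ν))).val)]
      exact key1 _
    rw [sum_congr rfl fun t _ => inner t]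
    rw [sum_congr rfl fun t ht => if_congr (hcond t (mem_range.mp ht)) rfl rfl]
    -- counting
    obtain ⟨q, r, hqr, hrd, hqf, hθ⟩ := theta_decomp p d f hp3 hd hf1 hdf hodd
    have huniq : ∀ t, t < f → (d*t+ν = (p-1)/2 ↔ (t = q ∧ ν = r)) := by
      intro t ht
      rw [hqr]
      constructor
      · intro h
        have e1 : (d*t+ν) % d = ν := by rw [Nat.mul_add_mod, Nat.mod_eq_of_lt hν]
        have e2 : (d*q+r) % d = r := by rw [Nat.mul_add_mod, Nat.mod_eq_of_lt hrd]
        rw [h] at e1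
        have hνr : ν = r := e1.symm.trans e2
        have ht2 : d*t = d*q := by
          rw [hνr] at h
          exact Nat.add_right_cancel h
        exact ⟨Nat.eq_of_mul_eq_mul_left (by omega) ht2, hνr⟩
      · rintro ⟨rfl, rfl⟩; rfl
    rw [sum_congr rfl fun t ht => if_congr (huniq t (mem_range.mp ht)) rfl rfl]
    by_cases hνr : ν = r
    · subst hνr
      have hθν : theta d f = ν := hθ
      rw [hθν, if_pos rfl]
      rw [sum_congr rfl (fun t _ => show (if t = q ∧ ν = ν then ((p:ℂ)-1) else -1)
          = (if t = q then (p:ℂ) else 0) - 1 by by_cases h : t = q <;> simp [h])]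
      rw [Finset.sum_sub_distrib, Finset.sum_ite_eq' (range f) q (fun _ => (p:ℂ)),
        if_pos (mem_range.mpr hqf), Finset.sum_const, card_range]
      simp
    · rw [hθ, if_neg (fun h => hνr h.symm)]
      rw [sum_congr rfl (fun t _ => show (if t = q ∧ ν = r then ((p:ℂ)-1) else -1)
          = -1 by simp [hνr])]
      rw [Finset.sum_const, card_range]
      simp
end

section
/- (Lemma 1) Let p be an odd prime, d ≥ 2 with d ∣ p−1, f = (p−1)/d. For every 0 ≤ ν ≤ d−1 and every k ≥ 1: n(k+1,ν) = Σ_{l=0}^{d−1} (ν,l) · n(k,l) + f·δ_{θν} · n(k−1,0). -/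
open Finset

private lemma myzeta_mod {p : ℕ} {ζ : ℂ} (hζp : ζ ^ p = 1) (a : ℕ) : ζ ^ a = ζ ^ (a % p) := by
  conv_lhs => rw [← Nat.div_add_mod a p]
  rw [pow_add, pow_mul, hζp, one_pow, one_mul]

private lemma mysum_shift {M : Type*} [AddCommMonoid M] {f : ℕ} (hf : 0 < f) (g : ℕ → M)
    (hg : ∀ u, g (u % f) = g u) (v : ℕ) :
    ∑ u ∈ Finset.range f, g (u + v) = ∑ u ∈ Finset.range f, g u := by
  have hinj : Set.InjOn (fun u => (u + v) % f) (Finset.range f) := by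
    intro a ha b hb h
    simp only [Finset.coe_range, Set.mem_Iio] at ha hb
    have h2 : a % f = b % f := Nat.ModEq.add_right_cancel' v h
    rwa [Nat.mod_eq_of_lt ha, Nat.mod_eq_of_lt hb] at h2
  have himg : (Finset.range f).image (fun u => (u + v) % f) = Finset.range f := by
    apply Finset.eq_of_subset_of_card_le
    · intro x hx
      simp only [Finset.mem_image] at hx
      obtain ⟨a, _, rfl⟩ := hx
      exact Finset.mem_range.2 (Nat.mod_lt _ hf)
    · rw [Finset.card_image_of_injOn hinj]
  calc ∑ u ∈ Finset.range f, g (u + v) = ∑ u ∈ Finset.range f, g ((u + v) % f) := by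
        simp only [hg]
      _ = ∑ u ∈ (Finset.range f).image (fun u => (u + v) % f), g u :=
        (Finset.sum_image (fun a ha b hb h => hinj ha hb h)).symm
      _ = ∑ u ∈ Finset.range f, g u := by rw [himg]

open scoped Classical in
noncomputable def myLog {p : ℕ} (ω : (ZMod p)ˣ) (x : ZMod p) : ℕ :=
  if h : ∃ m : ℕ, (ω : ZMod p) ^ m = x then h.choose else 0

private lemma myLog_spec {p : ℕ} (ω : (ZMod p)ˣ) (x : ZMod p)
    (h : ∃ m : ℕ, (ω : ZMod p) ^ m = x) : (ω : ZMod p) ^ (myLog ω x) = x := by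
  rw [myLog, dif_pos h]; exact h.choose_spec

private lemma myord {p : ℕ} (hp : p.Prime) (ω : (ZMod p)ˣ)
    (hω : ∀ x : (ZMod p)ˣ, ∃ n : ℕ, ω ^ n = x) : orderOf ω = p - 1 := by
  haveI := Fact.mk hp
  have h : ∀ x : (ZMod p)ˣ, x ∈ Subgroup.zpowers ω := by
    intro x
    obtain ⟨n, hn⟩ := hω x
    exact ⟨(n : ℤ), by simpa using hn⟩
  rw [orderOf_eq_card_of_forall_mem_zpowers h, Nat.card_eq_fintype_card, ZMod.card_units]

private lemma mypow_iff {p : ℕ} (ω : (ZMod p)ˣ) (hord : orderOf ω = p - 1) (a b : ℕ) :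
    (ω : ZMod p) ^ a = (ω : ZMod p) ^ b ↔ a ≡ b [MOD p - 1] := by
  constructor
  · intro h
    have h2 : ω ^ a = ω ^ b := Units.ext (by simpa using h)
    rwa [pow_eq_pow_iff_modEq, hord] at h2
  · intro h
    have h2 : ω ^ a = ω ^ b := by rwa [pow_eq_pow_iff_modEq, hord]
    simpa using congrArg (Units.val) h2

private lemma myneg {p : ℕ} (hp : p.Prime) (hp3 : 3 ≤ p)
    (ω : (ZMod p)ˣ) (hord : orderOf ω = p - 1) :
    (ω : ZMod p) ^ ((p - 1) / 2) = -1 := by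
  haveI := Fact.mk hp
  set t := (ω : ZMod p) ^ ((p - 1) / 2) with ht
  have hpe : 2 ∣ p - 1 := by
    rcases Nat.Prime.eq_two_or_odd hp with h | h
    · omega
    · omega
  have h1 : t * t = 1 := by
    rw [ht, ← pow_add]
    have h3 : (ω : ZMod p) ^ ((p - 1) / 2 + (p - 1) / 2) = (ω : ZMod p) ^ 0 := by
      rw [mypow_iff ω hord]
      have h4 : (p - 1) / 2 + (p - 1) / 2 = p - 1 := by omega
      rw [h4]
      exact (Nat.modEq_zero_iff_dvd).2 dvd_rfl
    simpa using h3
  have h2 : t ≠ 1 := by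
    intro hcon
    have h5 : (ω : ZMod p) ^ ((p - 1) / 2) = (ω : ZMod p) ^ 0 := by simpa using hcon
    rw [mypow_iff ω hord] at h5
    have h6 := (Nat.modEq_zero_iff_dvd).1 h5
    have := Nat.le_of_dvd (by omega) h6
    omega
  rcases mul_self_eq_one_iff.1 h1 with h | h
  · exact absurd h h2
  · exact h


/-- Lemma 1: `n(k+1,ν) = Σ_{l=0}^{d-1}(ν,l)·n(k,l) + f·δ_{θν}·n(k−1,0)`. -/
theorem nInt_recurrence (p d f : ℕ) (hp : p.Prime) (hodd : Odd p)
    (hd : 2 ≤ d) (hdvd : d ∣ p - 1) (hf : f = (p - 1) / d)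
    (ω : (ZMod p)ˣ) (hω : ∀ x : (ZMod p)ˣ, ∃ n : ℕ, ω ^ n = x)
    (ζ : ℂ) (hζ : IsPrimitiveRoot ζ p)
    (ν : ℕ) (hν : ν < d) (k : ℕ) (hk : 1 ≤ k) :
    nInt p d f ω ζ (k + 1) ν
      = ∑ l ∈ Finset.range d, (cycNum p d f ω ν l : ℂ) * nInt p d f ω ζ k l
        + (f : ℂ) * (if theta d f = ν then 1 else 0) * nInt p d f ω ζ (k - 1) 0 := by
  classical
  haveI := Fact.mk hp
  haveI : NeZero p := ⟨hp.ne_zero⟩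
  have hp3 : 3 ≤ p := by
    rcases hodd with ⟨t, ht⟩
    have := hp.two_le
    omega
  have hd0 : 0 < d := by omega
  have hdf : d * f = p - 1 := by rw [hf]; exact Nat.mul_div_cancel' hdvd
  have hf0 : 0 < f := by
    rcases Nat.eq_zero_or_pos f with rfl | h
    · simp at hdf; omega
    · exact h
  have hord := myord hp ω hω
  have hpow := mypow_iff ω hord
  have hzp : ζ ^ p = 1 := hζ.pow_eq_one
  have hEadd : ∀ x y : ZMod p, ζ ^ ((x + y).val) = ζ ^ x.val * ζ ^ y.val := by
    intro x y
    rw [ZMod.val_add, ← myzeta_mod hzp, pow_add]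
  have hper : ∀ c u : ℕ, (ω : ZMod p) ^ (d * (u % f) + c) = (ω : ZMod p) ^ (d * u + c) := by
    intro c u
    rw [hpow]
    have h1 : u % f ≡ u [MOD f] := Nat.mod_modEq u f
    have h2 := Nat.ModEq.mul_left' (c := d) h1
    rw [hdf] at h2
    exact h2.add_right c
  have hshift : ∀ c v : ℕ,
      ∑ u ∈ Finset.range f, ζ ^ (((ω : ZMod p) ^ (d * (u + v) + c)).val)
        = gaussPeriod p d f ω ζ c := by
    intro c v
    have := mysum_shift hf0 (fun u => ζ ^ (((ω : ZMod p) ^ (d * u + c)).val))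
      (fun u => by simp only [hper]) v
    simpa [gaussPeriod] using this
  have hex : ∀ x : ZMod p, x ≠ 0 → ∃ m : ℕ, (ω : ZMod p) ^ m = x := by
    intro x hx
    obtain ⟨xu, rfl⟩ := Ne.isUnit hx
    obtain ⟨n, hn⟩ := hω xu
    exact ⟨n, by rw [← Units.val_pow_eq_pow_val, hn]⟩
  have key : ∀ i : ℕ, gaussPeriod p d f ω ζ i * gaussPeriod p d f ω ζ (i + ν)
      = (∑ l ∈ Finset.range d, (cycNum p d f ω ν l : ℂ) * gaussPeriod p d f ω ζ (i + l))
        + (f : ℂ) * (if theta d f = ν then 1 else 0) := by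
    intro i
    -- Step 1: expand the product as a double sum
    have step1 : gaussPeriod p d f ω ζ i * gaussPeriod p d f ω ζ (i + ν)
        = ∑ w ∈ Finset.range f, ∑ u ∈ Finset.range f,
            ζ ^ ((((ω : ZMod p) ^ (d * u + i)) * ((1 : ZMod p) + (ω : ZMod p) ^ (d * w + ν))).val) := by
      calc gaussPeriod p d f ω ζ i * gaussPeriod p d f ω ζ (i + ν)
          = ∑ u ∈ Finset.range f, ζ ^ (((ω : ZMod p) ^ (d * u + i)).val)
              * gaussPeriod p d f ω ζ (i + ν) := by
            rw [gaussPeriod, Finset.sum_mul]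
        _ = ∑ u ∈ Finset.range f, ∑ w ∈ Finset.range f,
              ζ ^ (((ω : ZMod p) ^ (d * u + i)).val)
                * ζ ^ (((ω : ZMod p) ^ (d * (w + u) + (i + ν))).val) := by
            refine Finset.sum_congr rfl fun u _ => ?_
            rw [← hshift (i + ν) u, Finset.mul_sum]
        _ = ∑ u ∈ Finset.range f, ∑ w ∈ Finset.range f,
              ζ ^ ((((ω : ZMod p) ^ (d * u + i))
                * ((1 : ZMod p) + (ω : ZMod p) ^ (d * w + ν))).val) := by
            refine Finset.sum_congr rfl fun u _ => Finset.sum_congr rfl fun w _ => ?_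
            rw [← hEadd]
            congr 1
            have h3 : (ω : ZMod p) ^ (d * (w + u) + (i + ν))
                = (ω : ZMod p) ^ (d * u + i) * (ω : ZMod p) ^ (d * w + ν) := by
              rw [← pow_add]; congr 1; ring
            rw [h3, mul_add, mul_one]
        _ = _ := Finset.sum_comm
    -- Step 2: evaluate each inner sum
    have hval : ∀ w : ℕ, ∑ u ∈ Finset.range f,
        ζ ^ ((((ω : ZMod p) ^ (d * u + i)) * ((1 : ZMod p) + (ω : ZMod p) ^ (d * w + ν))).val)
        = if (1 : ZMod p) + (ω : ZMod p) ^ (d * w + ν) = 0 then (f : ℂ)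
          else gaussPeriod p d f ω ζ
            (i + myLog ω ((1 : ZMod p) + (ω : ZMod p) ^ (d * w + ν)) % d) := by
      intro w
      set x := (1 : ZMod p) + (ω : ZMod p) ^ (d * w + ν) with hx
      by_cases h0 : x = 0
      · rw [if_pos h0]
        simp [h0]
      · rw [if_neg h0]
        set m := myLog ω x with hmdef
        have hm : (ω : ZMod p) ^ m = x := myLog_spec ω x (hex x h0)
        have h4 : ∀ u : ℕ, ((ω : ZMod p) ^ (d * u + i)) * x
            = (ω : ZMod p) ^ (d * (u + m / d) + (i + m % d)) := by
          intro u
          rw [← hm, ← pow_add]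
          congr 1
          have h5 : m = d * (m / d) + m % d := (Nat.div_add_mod m d).symm
          conv_lhs => rw [h5]
          ring
        calc ∑ u ∈ Finset.range f, ζ ^ (((ω : ZMod p) ^ (d * u + i) * x).val)
            = ∑ u ∈ Finset.range f,
                ζ ^ (((ω : ZMod p) ^ (d * (u + m / d) + (i + m % d))).val) :=
              Finset.sum_congr rfl fun u _ => by rw [h4]
          _ = gaussPeriod p d f ω ζ (i + m % d) := hshift (i + m % d) (m / d)
    -- the residue of (p-1)/2 mod d is theta
    have hHmod : (p - 1) / 2 % d = theta d f := by
      rcases Nat.even_or_odd f with hfe | hfo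
      · obtain ⟨c, hc⟩ := hfe
        set D := d * c with hD
        have h7 : p - 1 = 2 * D := by rw [← hdf, hc, hD]; ring
        have h8 : (p - 1) / 2 = D := by omega
        rw [h8, hD, Nat.mul_mod_right, theta, if_pos ⟨c, hc⟩]
      · have h2d : 2 ∣ d := by
          have h2df : (2 : ℕ) ∣ d * f := by
            obtain ⟨t, ht⟩ := hodd
            rw [hdf]; omega
          rcases (Nat.Prime.dvd_mul Nat.prime_two).1 h2df with h | h
          · exact h
          · exact absurd (even_iff_two_dvd.2 h) (Nat.not_even_iff_odd.2 hfo)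
        obtain ⟨e, he⟩ := h2d
        obtain ⟨c, hc⟩ := hfo
        set E := e * f with hE
        have h7 : p - 1 = 2 * E := by rw [← hdf, he, hE]; ring
        have h8 : (p - 1) / 2 = E := by omega
        have h9 : E = d * c + e := by rw [hE, he, hc]; ring
        have h10 : e < d := by omega
        rw [h8, h9, Nat.mul_add_mod, Nat.mod_eq_of_lt h10, theta,
          if_neg (Nat.not_even_iff_odd.2 ⟨c, hc⟩), he]
        omega
    -- characterize the w with 1 + ω^(dw+ν) = 0
    have hzero_iff : ∀ w, w < f →
        (((1 : ZMod p) + (ω : ZMod p) ^ (d * w + ν) = 0)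
          ↔ (theta d f = ν ∧ w = (p - 1) / 2 / d)) := by
      intro w hw
      have hlt : d * w + ν < p - 1 := by
        have h1 : d * (w + 1) ≤ d * f := Nat.mul_le_mul_left d (by omega)
        rw [Nat.mul_add] at h1
        omega
      have hH2 : (p - 1) / 2 < p - 1 := by omega
      constructor
      · intro h0
        have hm1 : (ω : ZMod p) ^ (d * w + ν) = -1 := by linear_combination h0
        rw [← myneg hp hp3 ω hord, hpow] at hm1
        have heq : d * w + ν = (p - 1) / 2 := by
          have h4 := hm1
          unfold Nat.ModEq at h4
          rwa [Nat.mod_eq_of_lt hlt, Nat.mod_eq_of_lt hH2] at h4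
        refine ⟨?_, ?_⟩
        · rw [← hHmod, ← heq, Nat.mul_add_mod, Nat.mod_eq_of_lt hν]
        · rw [← heq, Nat.mul_add_div hd0, Nat.div_eq_of_lt hν, add_zero]
      · rintro ⟨hθ, rfl⟩
        have hνH : ν = (p - 1) / 2 % d := by rw [← hθ, ← hHmod]
        have heq : d * ((p - 1) / 2 / d) + ν = (p - 1) / 2 := by
          rw [hνH, Nat.div_add_mod]
        rw [heq, myneg hp hp3 ω hord]
        ring
    have hfilter0 : (Finset.range f).filter
          (fun w => (1 : ZMod p) + (ω : ZMod p) ^ (d * w + ν) = 0)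
        = if theta d f = ν then {(p - 1) / 2 / d} else ∅ := by
      ext w
      simp only [Finset.mem_filter, Finset.mem_range]
      by_cases hθ : theta d f = ν
      · rw [if_pos hθ]
        simp only [Finset.mem_singleton]
        constructor
        · rintro ⟨hw, h0⟩; exact ((hzero_iff w hw).1 h0).2
        · rintro rfl
          have hwf : (p - 1) / 2 / d < f := by
            rw [Nat.div_lt_iff_lt_mul hd0]
            calc (p - 1) / 2 < p - 1 := by omega
              _ = f * d := by rw [← hdf]; ring
          exact ⟨hwf, (hzero_iff _ hwf).2 ⟨hθ, rfl⟩⟩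
      · rw [if_neg hθ]
        simp only [Finset.notMem_empty, iff_false, not_and]
        intro hw h0
        exact hθ ((hzero_iff w hw).1 h0).1
    -- the fibers have cardinality given by the cyclotomic numbers
    have hC2 : ∀ l, l < d → cycNum p d f ω ν l =
        ((Finset.range f).filter (fun w =>
          ¬((1 : ZMod p) + (ω : ZMod p) ^ (d * w + ν) = 0)
          ∧ myLog ω ((1 : ZMod p) + (ω : ZMod p) ^ (d * w + ν)) % d = l)).card := by
      intro l hl
      rw [cycNum, ← Nat.card_eq_finsetCard]
      have hne : ∀ n : ℕ, (ω : ZMod p) ^ n ≠ 0 := by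
        intro n
        rw [← Units.val_pow_eq_pow_val]
        exact Units.ne_zero _
      apply Nat.card_congr
      refine Equiv.ofBijective (fun s => ⟨s.val.1, ?_⟩) ⟨?_, ?_⟩
      · -- membership
        obtain ⟨⟨u, v⟩, hu, hv, hcond⟩ := s
        simp only [Finset.mem_filter, Finset.mem_range]
        refine ⟨hu, ?_, ?_⟩
        · rw [hcond]; exact hne _
        · have hml : (ω : ZMod p) ^ (myLog ω ((1 : ZMod p) + (ω : ZMod p) ^ (d * u + ν)))
              = (ω : ZMod p) ^ (d * v + l) := by
            rw [myLog_spec ω _ (hex _ (by rw [hcond]; exact hne _)), hcond]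
          rw [hpow] at hml
          have h11 := Nat.ModEq.of_dvd hdvd hml
          unfold Nat.ModEq at h11
          rw [Nat.mul_add_mod, Nat.mod_eq_of_lt hl] at h11
          exact h11
      · -- injective
        rintro ⟨⟨u1, v1⟩, hu1, hv1, hc1⟩ ⟨⟨u2, v2⟩, hu2, hv2, hc2⟩ h
        simp only [Subtype.mk.injEq] at h ⊢
        subst h
        have h12 : (ω : ZMod p) ^ (d * v1 + l) = (ω : ZMod p) ^ (d * v2 + l) := by
          rw [← hc1, ← hc2]
        rw [hpow] at h12
        have hlt1 : d * v1 + l < p - 1 := by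
          have h1 : d * (v1 + 1) ≤ d * f := Nat.mul_le_mul_left d (by omega)
          rw [Nat.mul_add] at h1; omega
        have hlt2 : d * v2 + l < p - 1 := by
          have h1 : d * (v2 + 1) ≤ d * f := Nat.mul_le_mul_left d (by omega)
          rw [Nat.mul_add] at h1; omega
        have h13 : d * v1 + l = d * v2 + l := by
          unfold Nat.ModEq at h12
          rwa [Nat.mod_eq_of_lt hlt1, Nat.mod_eq_of_lt hlt2] at h12
        have h14 : v1 = v2 := Nat.eq_of_mul_eq_mul_left hd0 (by omega)
        exact Prod.ext rfl h14
      · -- surjective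
        rintro ⟨w, hw⟩
        simp only [Finset.mem_filter, Finset.mem_range] at hw
        obtain ⟨hwf, hx0, hml⟩ := hw
        set x := (1 : ZMod p) + (ω : ZMod p) ^ (d * w + ν) with hxdef
        set m0 := myLog ω x with hm0def
        set m := m0 % (p - 1) with hmdef
        have hm0 : (ω : ZMod p) ^ m0 = x := myLog_spec ω x (hex x hx0)
        have hmx : (ω : ZMod p) ^ m = x := by
          rw [← hm0, hpow]
          exact Nat.mod_modEq m0 (p - 1)
        have hmlt : m < p - 1 := Nat.mod_lt _ (by omega)
        have hmd : m % d = l := by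
          rw [hmdef, Nat.mod_mod_of_dvd m0 hdvd]
          exact hml
        have hmval : m = d * (m / d) + l := by
          conv_lhs => rw [← Nat.div_add_mod m d]
          rw [hmd]
        have hvf : m / d < f := by
          rw [Nat.div_lt_iff_lt_mul hd0]
          calc m < p - 1 := hmlt
            _ = f * d := by rw [← hdf]; ring
        refine ⟨⟨(w, m / d), hwf, hvf, ?_⟩, rfl⟩
        rw [← hxdef, ← hmval, hmx]
    -- assemble
    rw [step1]
    rw [Finset.sum_congr rfl fun w _ => hval w]
    rw [Finset.sum_ite]
    rw [add_comm]
    congr 1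
    · -- main term
      rw [← Finset.sum_fiberwise_of_maps_to
        (fun w _ => Finset.mem_range.2 (Nat.mod_lt _ hd0) :
          ∀ w ∈ (Finset.range f).filter (fun w =>
            ¬((1 : ZMod p) + (ω : ZMod p) ^ (d * w + ν) = 0)),
            myLog ω ((1 : ZMod p) + (ω : ZMod p) ^ (d * w + ν)) % d ∈ Finset.range d)]
      refine Finset.sum_congr rfl fun l hl => ?_
      have hl' := Finset.mem_range.1 hl
      calc ∑ w ∈ ((Finset.range f).filter (fun w =>
              ¬((1 : ZMod p) + (ω : ZMod p) ^ (d * w + ν) = 0))).filter (fun w =>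
              myLog ω ((1 : ZMod p) + (ω : ZMod p) ^ (d * w + ν)) % d = l),
            gaussPeriod p d f ω ζ
              (i + myLog ω ((1 : ZMod p) + (ω : ZMod p) ^ (d * w + ν)) % d)
          = ∑ w ∈ ((Finset.range f).filter (fun w =>
              ¬((1 : ZMod p) + (ω : ZMod p) ^ (d * w + ν) = 0))).filter (fun w =>
              myLog ω ((1 : ZMod p) + (ω : ZMod p) ^ (d * w + ν)) % d = l),
            gaussPeriod p d f ω ζ (i + l) :=
            Finset.sum_congr rfl fun w hw => by
              rw [(Finset.mem_filter.1 hw).2]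
        _ = (cycNum p d f ω ν l : ℂ) * gaussPeriod p d f ω ζ (i + l) := by
            rw [Finset.sum_const, Finset.filter_filter, ← hC2 l hl', nsmul_eq_mul]
    · -- delta term
      rw [hfilter0]
      by_cases hθ : theta d f = ν
      · rw [if_pos hθ, if_pos hθ]
        simp
      · rw [if_neg hθ, if_neg hθ]
        simp
  -- final assembly
  obtain ⟨k', rfl⟩ : ∃ k', k = k' + 1 := ⟨k - 1, by omega⟩
  have hn0 : nInt p d f ω ζ (k' + 1 - 1) 0 = ∑ i ∈ Finset.range d, gaussPeriod p d f ω ζ i ^ (k' + 1) := by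
    simp only [nInt, Nat.add_sub_cancel]
    exact Finset.sum_congr rfl fun i _ => by rw [add_zero, ← pow_succ]
  calc nInt p d f ω ζ (k' + 1 + 1) ν
      = ∑ i ∈ Finset.range d, gaussPeriod p d f ω ζ i ^ (k' + 1) *
          (gaussPeriod p d f ω ζ i * gaussPeriod p d f ω ζ (i + ν)) := by
        simp only [nInt]
        exact Finset.sum_congr rfl fun i _ => by ring
    _ = ∑ i ∈ Finset.range d, gaussPeriod p d f ω ζ i ^ (k' + 1) *
          ((∑ l ∈ Finset.range d, (cycNum p d f ω ν l : ℂ) * gaussPeriod p d f ω ζ (i + l))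
            + (f : ℂ) * (if theta d f = ν then 1 else 0)) := by
        exact Finset.sum_congr rfl fun i _ => by rw [key i]
    _ = (∑ i ∈ Finset.range d, ∑ l ∈ Finset.range d, (cycNum p d f ω ν l : ℂ) *
          (gaussPeriod p d f ω ζ i ^ (k' + 1) * gaussPeriod p d f ω ζ (i + l)))
        + (f : ℂ) * (if theta d f = ν then 1 else 0) *
            ∑ i ∈ Finset.range d, gaussPeriod p d f ω ζ i ^ (k' + 1) := by
        rw [Finset.mul_sum, ← Finset.sum_add_distrib]
        refine Finset.sum_congr rfl fun i _ => ?_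
        rw [mul_add, Finset.mul_sum]
        congr 1
        · exact Finset.sum_congr rfl fun l _ => by ring
        · ring
    _ = _ := by
        rw [Finset.sum_comm, hn0]
        congr 1
        refine Finset.sum_congr rfl fun l _ => ?_
        rw [nInt, Finset.mul_sum]
end

section
/- Let p be an odd prime, d ≥ 2 with d ∣ p−1. For every k ≥ 0 and 0 ≤ ν ≤ d−1, the complex number n(k,ν) = Σ_{i=0}^{d−1} η_i^k · η_{i+ν} is a rational integer, i.e. lies in the image of ℤ in ℂ. -/
open Finset

section auxlems
variable {p : ℕ}


lemma pow_val_add' [NeZero p] {ζ : ℂ} (hζ1 : ζ ^ p = 1) (a b : ZMod p) :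
    ζ ^ (a + b).val = ζ ^ a.val * ζ ^ b.val := by
  have key : ∀ m : ℕ, ζ ^ (m % p) = ζ ^ m := by
    intro m
    conv_rhs => rw [← Nat.mod_add_div m p]
    rw [pow_add, pow_mul, hζ1, one_pow, mul_one]
  rw [ZMod.val_add, key, pow_add]

lemma pow_val_sum' [NeZero p] {ζ : ℂ} (hζ1 : ζ ^ p = 1) {α : Type*} [DecidableEq α]
    (s : Finset α) (g : α → ZMod p) :
    ζ ^ (∑ x ∈ s, g x).val = ∏ x ∈ s, ζ ^ (g x).val := by
  induction s using Finset.induction with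
  | empty => simp
  | insert _ _ hx ih =>
      rw [Finset.sum_insert hx, pow_val_add' hζ1, ih, Finset.prod_insert hx]

lemma sum_val_zero' [NeZero p] (hp1 : 1 < p) {ζ : ℂ} (hζ : IsPrimitiveRoot ζ p) :
    ∑ x : ZMod p, ζ ^ x.val = 0 := by
  rw [← hζ.geom_sum_eq_zero hp1]
  refine Finset.sum_nbij' (fun x : ZMod p => x.val) (fun m => (m : ZMod p))
    ?_ ?_ ?_ ?_ ?_
  · intro a _; exact Finset.mem_range.2 (ZMod.val_lt a)
  · intro a _; exact Finset.mem_univ _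
  · intro a _; simp [ZMod.natCast_val, ZMod.cast_id]
  · intro a ha; exact ZMod.val_cast_of_lt (Finset.mem_range.1 ha)
  · intro a _; rfl

lemma sum_orbit' [NeZero p] (hp : p.Prime) (ω : (ZMod p)ˣ)
    (hω : ∀ x : (ZMod p)ˣ, ∃ n : ℕ, ω ^ n = x)
    {ζ : ℂ} (hsum0 : ∑ x : ZMod p, ζ ^ x.val = 0) (b : ZMod p) :
    ∑ j ∈ Finset.range (p - 1), ζ ^ ((ω : ZMod p) ^ j * b).val
      = if b = 0 then ((p : ℂ) - 1) else -1 := by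
  haveI : Fact p.Prime := ⟨hp⟩
  have hp1 : 1 < p := hp.one_lt
  have hord : orderOf ω = p - 1 := by
    have h1 : ∀ x : (ZMod p)ˣ, x ∈ Subgroup.zpowers ω := by
      intro x
      obtain ⟨n, hn⟩ := hω x
      exact ⟨(n : ℤ), by simpa using hn⟩
    rw [orderOf_eq_card_of_forall_mem_zpowers h1, Nat.card_eq_fintype_card,
      ZMod.card_units]
  by_cases hb : b = 0
  · subst hb
    simp only [mul_zero, ZMod.val_zero, pow_zero, Finset.sum_const,
      Finset.card_range, nsmul_eq_mul, mul_one, if_true]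
    rw [Nat.cast_sub hp.one_le, Nat.cast_one]
  · rw [if_neg hb]
    obtain ⟨bu, hbu⟩ := Ne.isUnit hb
    have herase : ∑ x ∈ Finset.univ.erase (0 : ZMod p), ζ ^ x.val = -1 := by
      have h := Finset.add_sum_erase Finset.univ (fun x : ZMod p => ζ ^ x.val)
        (Finset.mem_univ (0 : ZMod p))
      rw [hsum0] at h
      simp only [ZMod.val_zero, pow_zero] at h
      linear_combination h
    rw [← herase]
    refine Finset.sum_nbij (fun j => ((ω ^ j * bu : (ZMod p)ˣ) : ZMod p))
      ?_ ?_ ?_ ?_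
    · intro j _
      refine Finset.mem_erase.2 ⟨(ω ^ j * bu : (ZMod p)ˣ).ne_zero, Finset.mem_univ _⟩
    · intro j1 h1 j2 h2 heq
      have hu : (ω ^ j1 * bu : (ZMod p)ˣ) = ω ^ j2 * bu := Units.ext heq
      have hω12 : ω ^ j1 = ω ^ j2 := mul_right_cancel hu
      have hm1 : j1 ∈ Set.Iio (orderOf ω) := by
        rw [hord]; simpa using h1
      have hm2 : j2 ∈ Set.Iio (orderOf ω) := by
        rw [hord]; simpa using h2
      exact pow_injOn_Iio_orderOf hm1 hm2 hω12
    · intro x hx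
      have hx0 : x ≠ 0 := by simpa using hx
      obtain ⟨xu, hxu⟩ := Ne.isUnit hx0
      obtain ⟨n, hn⟩ := hω (xu * bu⁻¹)
      refine ⟨n % (p - 1), by
        simp only [Finset.coe_range, Set.mem_Iio]
        exact Nat.mod_lt _ (by omega), ?_⟩
      have hpow : ω ^ (n % (p - 1)) = xu * bu⁻¹ := by
        rw [← hord, pow_mod_orderOf, hn]
      show ((ω ^ (n % (p - 1)) * bu : (ZMod p)ˣ) : ZMod p) = x
      rw [hpow]
      simp [hxu]
    · intro j _
      rw [← hbu]
      push_cast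
      ring

end auxlems

/-- each `n(k,ν)` is a rational integer. -/
theorem nInt_is_integer (p d f : ℕ) (hp : p.Prime) (hodd : Odd p)
    (hd : 2 ≤ d) (hdvd : d ∣ p - 1) (hf : f = (p - 1) / d)
    (ω : (ZMod p)ˣ) (hω : ∀ x : (ZMod p)ˣ, ∃ n : ℕ, ω ^ n = x)
    (ζ : ℂ) (hζ : IsPrimitiveRoot ζ p)
    (k : ℕ) (ν : ℕ) (hν : ν < d) :
    ∃ z : ℤ, nInt p d f ω ζ k ν = (z : ℂ) := by
  classical
  haveI : Fact p.Prime := ⟨hp⟩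
  haveI : NeZero p := ⟨hp.ne_zero⟩
  have hp1 : 1 < p := hp.one_lt
  have hζ1 : ζ ^ p = 1 := hζ.pow_eq_one
  have hdf : d * f = p - 1 := by rw [hf]; exact Nat.mul_div_cancel' hdvd
  have hfpos : 0 < f := by
    rcases Nat.eq_zero_or_pos f with h | h
    · exfalso; rw [h, mul_zero] at hdf; omega
    · exact h
  have hdpos : 0 < d := by omega
  have hω1 : ω ^ (d * f) = 1 := by
    rw [hdf, ← ZMod.card_units p, pow_card_eq_one]
  have hcf : ∀ m n : ℕ,
      (ω : ZMod p) ^ (d * (m % f) + n) = (ω : ZMod p) ^ (d * m + n) := by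
    intro m n
    have hmn : d * m + n = d * f * (m / f) + (d * (m % f) + n) := by
      conv_lhs => rw [← Nat.div_add_mod m f]
      ring
    have h2 : ω ^ (d * (m % f) + n) = ω ^ (d * m + n) := by
      conv_rhs => rw [hmn, pow_add, pow_mul, hω1, one_pow, one_mul]
    exact_mod_cast congrArg Units.val h2
  have hsum0 : ∑ x : ZMod p, ζ ^ x.val = 0 := sum_val_zero' hp1 hζ
  -- step 1 : expand the k-th power and the product
  have step1 : nInt p d f ω ζ k ν =
      ∑ i ∈ Finset.range d, ∑ t ∈ Fintype.piFinset (fun _ : Fin k => Finset.range f),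
        ∑ u ∈ Finset.range f,
          ζ ^ ((∑ l : Fin k, (ω : ZMod p) ^ (d * t l + i))
                + (ω : ZMod p) ^ (d * u + (i + ν))).val := by
    unfold nInt gaussPeriod
    refine Finset.sum_congr rfl fun i _ => ?_
    have hpow : (∑ u ∈ Finset.range f, ζ ^ ((ω : ZMod p) ^ (d * u + i)).val) ^ k
        = ∑ t ∈ Fintype.piFinset (fun _ : Fin k => Finset.range f),
            ∏ l : Fin k, ζ ^ ((ω : ZMod p) ^ (d * t l + i)).val := by
      calc (∑ u ∈ Finset.range f, ζ ^ ((ω : ZMod p) ^ (d * u + i)).val) ^ k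
          = ∏ _l : Fin k, ∑ u ∈ Finset.range f, ζ ^ ((ω : ZMod p) ^ (d * u + i)).val := by
            rw [Finset.prod_const, Finset.card_univ, Fintype.card_fin]
        _ = _ := Finset.prod_univ_sum (fun _ : Fin k => Finset.range f)
            (fun _ u => ζ ^ ((ω : ZMod p) ^ (d * u + i)).val)
    rw [hpow, Finset.sum_mul]
    refine Finset.sum_congr rfl fun t _ => ?_
    rw [Finset.mul_sum]
    refine Finset.sum_congr rfl fun u _ => ?_
    rw [pow_val_add' hζ1, pow_val_sum' hζ1]
  -- substitution t ↦ s with t l = (s l + u) % f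
  have hsub : ∀ i, ∀ u ∈ Finset.range f,
      ∑ t ∈ Fintype.piFinset (fun _ : Fin k => Finset.range f),
        ζ ^ ((∑ l : Fin k, (ω : ZMod p) ^ (d * t l + i))
              + (ω : ZMod p) ^ (d * u + (i + ν))).val
      = ∑ s ∈ Fintype.piFinset (fun _ : Fin k => Finset.range f),
          ζ ^ ((ω : ZMod p) ^ (d * u + i)
                * ((∑ l : Fin k, (ω : ZMod p) ^ (d * s l)) + (ω : ZMod p) ^ ν)).val := by
    intro i u hu
    have hu' : u < f := Finset.mem_range.1 hu
    refine (Finset.sum_nbij' (fun s => fun l => (s l + u) % f)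
      (fun t => fun l => (t l + (f - u)) % f) ?_ ?_ ?_ ?_ ?_).symm
    · intro s _
      exact Fintype.mem_piFinset.2 fun l => Finset.mem_range.2 (Nat.mod_lt _ hfpos)
    · intro t _
      exact Fintype.mem_piFinset.2 fun l => Finset.mem_range.2 (Nat.mod_lt _ hfpos)
    · intro s hs
      funext l
      have hsl : s l < f := Finset.mem_range.1 (Fintype.mem_piFinset.1 hs l)
      show ((s l + u) % f + (f - u)) % f = s l
      rw [Nat.mod_add_mod]
      have : s l + u + (f - u) = s l + f := by omega
      rw [this, Nat.add_mod_right, Nat.mod_eq_of_lt hsl]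
    · intro t ht
      funext l
      have htl : t l < f := Finset.mem_range.1 (Fintype.mem_piFinset.1 ht l)
      show ((t l + (f - u)) % f + u) % f = t l
      rw [Nat.mod_add_mod]
      have : t l + (f - u) + u = t l + f := by omega
      rw [this, Nat.add_mod_right, Nat.mod_eq_of_lt htl]
    · intro s _
      have hAB : (ω : ZMod p) ^ (d * u + i)
            * ((∑ l : Fin k, (ω : ZMod p) ^ (d * s l)) + (ω : ZMod p) ^ ν)
          = (∑ l : Fin k, (ω : ZMod p) ^ (d * ((s l + u) % f) + i))
              + (ω : ZMod p) ^ (d * u + (i + ν)) := by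
        rw [mul_add, Finset.mul_sum]
        congr 1
        · refine Finset.sum_congr rfl fun l _ => ?_
          rw [hcf (s l + u) i, ← pow_add]
          congr 1
          ring
        · rw [← pow_add]
          congr 1
          ring
      rw [hAB]
  -- merging the double sum over (i,u) into a single sum over range (p-1)
  have hmerge : ∀ b : ZMod p,
      ∑ i ∈ Finset.range d, ∑ u ∈ Finset.range f,
        ζ ^ ((ω : ZMod p) ^ (d * u + i) * b).val
      = ∑ j ∈ Finset.range (p - 1), ζ ^ ((ω : ZMod p) ^ j * b).val := by
    intro b
    rw [← hdf, ← Finset.sum_product']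
    refine Finset.sum_nbij' (fun x => d * x.2 + x.1) (fun j => (j % d, j / d))
      ?_ ?_ ?_ ?_ ?_
    · rintro ⟨i, u⟩ hx
      simp only [Finset.mem_product, Finset.mem_range] at hx
      refine Finset.mem_range.2 ?_
      show d * u + i < d * f
      have h1 : d * (u + 1) ≤ d * f := Nat.mul_le_mul_left d hx.2
      have h2 : d * (u + 1) = d * u + d := by ring
      omega
    · intro j hj
      have hj' : j < d * f := Finset.mem_range.1 hj
      simp only [Finset.mem_product, Finset.mem_range]
      constructor
      · exact Nat.mod_lt _ hdpos
      · exact Nat.div_lt_of_lt_mul (by omega)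
    · rintro ⟨i, u⟩ hx
      simp only [Finset.mem_product, Finset.mem_range] at hx
      have h1 : (d * u + i) % d = i := by
        rw [Nat.mul_add_mod, Nat.mod_eq_of_lt hx.1]
      have h2 : (d * u + i) / d = u := by
        rw [Nat.mul_add_div hdpos, Nat.div_eq_of_lt hx.1, Nat.add_zero]
      simp [h1, h2]
    · intro j _
      show d * (j / d) + j % d = j
      exact Nat.div_add_mod j d
    · intro x _
      rfl
  -- assemble
  refine ⟨∑ s ∈ Fintype.piFinset (fun _ : Fin k => Finset.range f),
    if ((∑ l : Fin k, (ω : ZMod p) ^ (d * s l)) + (ω : ZMod p) ^ ν) = 0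
      then ((p : ℤ) - 1) else -1, ?_⟩
  rw [step1]
  rw [Finset.sum_congr rfl fun i _ => Finset.sum_comm]
  rw [Finset.sum_congr rfl fun i _ =>
    Finset.sum_congr rfl fun u hu => hsub i u hu]
  rw [Finset.sum_congr rfl fun i _ => Finset.sum_comm]
  rw [Finset.sum_comm]
  rw [Finset.sum_congr rfl fun s _ => hmerge _]
  rw [Finset.sum_congr rfl fun s _ => sum_orbit' hp ω hω hsum0 _]
  rw [Int.cast_sum]
  refine Finset.sum_congr rfl fun s _ => ?_
  split <;> push_cast <;> ring
end
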